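/- arXiv:2203.16226 — 5 statements merged into one kernel-verified Lean document; each statement's English description precedes it below -/
import Mathlib

section
/- Let F be a dill map over A^ℕ. Then F induces a well-defined map on the Besicovitch quotient — i.e., for all x, y ∈ A^ℕ, 𝔡_H(x,y) = 0 implies 𝔡_H(F(x),F(y)) = 0 — if and only if F is either a constant function or uniform. -/
open Filter

/-- The finite factor `x_[i, i+n)` of the infinite word `x`. -/
def factor {A : Type*} (x : ℕ → A) (i n : ℕ) : List A := List.ofFn (fun k : Fin n => x (i + k))

/-- The shift map `σ` on infinite words. -/
def shift {A : Type*} (x : ℕ → A) : ℕ → A := fun i => x (i + 1)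
/-- The Hamming distance between two finite words (number of mismatching positions). -/
def hammingL {A : Type*} [DecidableEq A] (u v : List A) : ℕ :=
  ((List.range (max u.length v.length)).filter (fun i => u[i]? ≠ v[i]?)).length

/-- The Besicovitch pseudometric `𝔡_H`. -/
noncomputable def besic {A : Type*} [DecidableEq A] (x y : ℕ → A) : ℝ :=
  limsup (fun l : ℕ => (hammingL (factor x 0 l) (factor y 0 l) : ℝ) / l) atTop
/-- The window `x_[i, i+s)` of the infinite word `x`, as an element of `A^s`. -/
def window {A : Type*} (x : ℕ → A) (i : ℕ) (s : ℕ) : Fin s → A := fun k => x (i + k)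

/-- The cocycle `S_n(x) = ∑_{j<n} |f(x_[j,j+s))|` of a local rule `f`. -/
def cocycle {A : Type*} {s : ℕ} (f : (Fin s → A) → List A) (x : ℕ → A) (n : ℕ) : ℕ :=
  ∑ j ∈ Finset.range n, (f (window x j s)).length

/-- `F` is the dill map with local rule `f`: for every `x`, `F x` is the infinite
concatenation `f(x_[0,s)) f(x_[1,1+s)) f(x_[2,2+s)) ⋯`. -/
def IsDillVia {A : Type*} {s : ℕ} (f : (Fin s → A) → List A) (F : (ℕ → A) → ℕ → A) : Prop :=
  ∀ (x : ℕ → A) (n k : ℕ) (h : k < (f (window x n s)).length),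
    F x (cocycle f x n + k) = (f (window x n s)).get ⟨k, h⟩

namespace DP
variable {A : Type*} [DecidableEq A]

def mism (x y : ℕ → A) (l : ℕ) : ℕ := ((Finset.range l).filter fun i => x i ≠ y i).card

lemma list_count (p : ℕ → Prop) [DecidablePred p] (l : ℕ) :
    ((List.range l).filter (fun i => decide (p i))).length
      = ((Finset.range l).filter p).card := by
  induction l with
  | zero => simp
  | succ n ih =>
    rw [List.range_succ, List.filter_append, List.length_append, ih, Finset.range_add_one,
      Finset.filter_insert]
    by_cases h : p n
    · rw [if_pos h, Finset.card_insert_of_notMem (by simp)]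
      simp [h]
    · rw [if_neg h]
      simp [h]

lemma hamming_factor (x y : ℕ → A) (l : ℕ) :
    hammingL (factor x 0 l) (factor y 0 l) = mism x y l := by
  unfold hammingL
  have h1 : (factor x 0 l).length = l := by simp [factor]
  have h2 : (factor y 0 l).length = l := by simp [factor]
  rw [h1, h2, max_self]
  rw [List.filter_congr (q := fun i => decide (x i ≠ y i)) ?_]
  · exact list_count _ l
  · intro i hi
    rw [List.mem_range] at hi
    simp [factor, List.getElem?_ofFn, hi]

lemma besic_eq (x y : ℕ → A) :
    besic x y = limsup (fun l : ℕ => (mism x y l : ℝ) / l) atTop := by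
  unfold besic; congr 1; funext l; rw [hamming_factor]


-- limsup helpers
section Limsup
variable {u v w : ℕ → ℝ}

-- generic limsup helpers for sequences in [0,1]
variable {u v w : ℕ → ℝ}

lemma bddle (h : ∀ l, u l ≤ 1) : IsBoundedUnder (· ≤ ·) atTop u :=
  isBoundedUnder_of ⟨1, h⟩

lemma bddge (h : ∀ l, 0 ≤ u l) : IsBoundedUnder (· ≥ ·) atTop u :=
  isBoundedUnder_of ⟨0, h⟩

lemma cobdd (h : ∀ l, 0 ≤ u l) : IsCoboundedUnder (· ≤ ·) atTop u :=
  (bddge h).isCoboundedUnder_le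

lemma limsup_nonneg (h : ∀ l, 0 ≤ u l) (h1 : ∀ l, u l ≤ 1) : 0 ≤ limsup u atTop :=
  le_limsup_of_frequently_le (Eventually.frequently (Eventually.of_forall h)) (bddle h1)

lemma limsup_le_add' (h0u : ∀ l, 0 ≤ u l) (h0v : ∀ l, 0 ≤ v l) (h1v : ∀ l, v l ≤ 1)
    (h0w : ∀ l, 0 ≤ w l) (h1w : ∀ l, w l ≤ 1)
    (h : ∀ l, u l ≤ v l + w l) :
    limsup u atTop ≤ limsup v atTop + limsup w atTop := by
  calc limsup u atTop ≤ limsup (v + w) atTop := by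
        exact limsup_le_limsup (Eventually.of_forall h) (cobdd h0u)
          (isBoundedUnder_le_add (bddle h1v) (bddle h1w))
    _ ≤ _ := limsup_add_le (bddge h0v) (bddle h1v) (cobdd h0w) (bddle h1w)

lemma limsup_le_of_le_add_tendsto (h0u : ∀ l, 0 ≤ u l) (h0v : ∀ l, 0 ≤ v l) (h1v : ∀ l, v l ≤ 1)
    (hw : Tendsto w atTop (nhds 0)) (h : ∀ l, u l ≤ v l + w l) :
    limsup u atTop ≤ limsup v atTop := by
  have h2 : limsup u atTop ≤ limsup (v + w) atTop := by
    exact limsup_le_limsup (Eventually.of_forall h) (cobdd h0u)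
      (isBoundedUnder_le_add (bddle h1v) hw.isBoundedUnder_le)
  have h3 : limsup (v + w) atTop ≤ limsup v atTop + limsup w atTop :=
    limsup_add_le (bddge h0v) (bddle h1v) hw.isBoundedUnder_ge.isCoboundedUnder_le
      hw.isBoundedUnder_le
  rw [hw.limsup_eq, add_zero] at h3
  exact h2.trans h3

lemma tendsto_zero_of_limsup_zero (h0 : ∀ l, 0 ≤ u l) (h1 : ∀ l, u l ≤ 1)
    (h : limsup u atTop = 0) : Tendsto u atTop (nhds 0) := by
  apply tendsto_of_liminf_eq_limsup ?_ h (bddle h1) (bddge h0)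
  apply le_antisymm
  · rw [← h]; exact liminf_le_limsup (bddle h1) (bddge h0)
  · exact le_liminf_of_le (bddle h1).isCoboundedUnder_ge (Eventually.of_forall h0)

end Limsup

def sh (a : ℕ) (x : ℕ → A) : ℕ → A := fun t => x (t + a)

lemma mism_le (x y : ℕ → A) (l : ℕ) : mism x y l ≤ l := by
  have := Finset.card_filter_le (Finset.range l) (fun i => x i ≠ y i)
  exact this.trans (by simp)

lemma mism_mono (x y : ℕ → A) {l m : ℕ} (h : l ≤ m) : mism x y l ≤ mism x y m :=
  Finset.card_le_card (Finset.filter_subset_filter _ (Finset.range_subset_range.2 h))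

lemma mism_add_le (x y : ℕ → A) (l a : ℕ) : mism x y (l + a) ≤ mism x y l + a := by
  unfold mism
  have hsub : Finset.range (l + a) = Finset.range l ∪ Finset.Ico l (l + a) := by
    simp only [Finset.range_eq_Ico]
    exact (Finset.Ico_union_Ico_eq_Ico (Nat.zero_le l) (Nat.le_add_right l a)).symm
  rw [hsub, Finset.filter_union]
  refine (Finset.card_union_le _ _).trans ?_
  gcongr
  refine (Finset.card_filter_le _ _).trans ?_
  simp

lemma mism_triangle (x y z : ℕ → A) (l : ℕ) : mism x z l ≤ mism x y l + mism y z l := by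
  unfold mism
  refine le_trans (Finset.card_le_card ?_) (Finset.card_union_le _ _)
  intro i hi
  simp only [Finset.mem_filter, Finset.mem_union, Finset.mem_range] at *
  rcases hi with ⟨hl, hne⟩
  by_cases h : x i = y i
  · exact Or.inr ⟨hl, fun hy => hne (h.trans hy)⟩
  · exact Or.inl ⟨hl, h⟩

lemma mism_symm (x y : ℕ → A) (l : ℕ) : mism x y l = mism y x l := by
  unfold mism
  congr 1
  apply Finset.filter_congr
  intro i _
  simp [ne_comm]

lemma mism_evzero {x y : ℕ → A} {N : ℕ} (h : ∀ t, N ≤ t → x t = y t) (l : ℕ) :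
    mism x y l ≤ N := by
  unfold mism
  refine le_trans (Finset.card_le_card ?_) (by simp : (Finset.range N).card ≤ N)
  intro i hi
  simp only [Finset.mem_filter, Finset.mem_range] at *
  by_contra hiN
  exact hi.2 (h i (le_of_not_gt fun hh => hiN (by omega)))

lemma mism_sh_le (x y : ℕ → A) (a l : ℕ) : mism (sh a x) (sh a y) l ≤ mism x y (l + a) := by
  unfold mism
  apply Finset.card_le_card_of_injOn (fun i => i + a)
  · intro i hi
    rw [Finset.mem_coe, Finset.mem_filter] at hi
    rw [Finset.mem_coe, Finset.mem_filter]
    simp only [Finset.mem_range, sh] at *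
    exact ⟨by omega, hi.2⟩
  · intro i _ j _ hij; simp only at hij; omega

lemma mism_le_sh (x y : ℕ → A) (a l : ℕ) :
    mism x y (l + a) ≤ mism (sh a x) (sh a y) l + a := by
  unfold mism
  have hsub : Finset.range (l + a) = Finset.Ico a (l + a) ∪ Finset.range a := by
    simp only [Finset.range_eq_Ico]
    rw [Finset.union_comm]
    exact (Finset.Ico_union_Ico_eq_Ico (Nat.zero_le a) (by omega)).symm
  rw [hsub, Finset.filter_union]
  refine (Finset.card_union_le _ _).trans ?_
  apply Nat.add_le_add
  · apply Finset.card_le_card_of_injOn (fun i => i - a)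
    · intro i hi
      rw [Finset.mem_coe, Finset.mem_filter] at hi
      rw [Finset.mem_coe, Finset.mem_filter]
      simp only [Finset.mem_Ico, Finset.mem_range, sh] at *
      rcases hi with ⟨⟨h1, h2⟩, hne⟩
      constructor
      · omega
      · have : i - a + a = i := by omega
        rw [this]; exact hne
    · intro i hi j hj hij
      simp only [Finset.coe_filter, Set.mem_setOf_eq, Finset.mem_Ico] at *
      omega
  · refine (Finset.card_filter_le _ _).trans (by simp)


noncomputable def q (x y : ℕ → A) (l : ℕ) : ℝ := (mism x y l : ℝ) / l

lemma q_nonneg (x y : ℕ → A) (l : ℕ) : 0 ≤ q x y l := by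
  unfold q; positivity

lemma q_le_one (x y : ℕ → A) (l : ℕ) : q x y l ≤ 1 := by
  unfold q
  rcases Nat.eq_zero_or_pos l with h | h
  · simp [h]
  · rw [div_le_one (by exact_mod_cast h)]
    exact_mod_cast mism_le x y l

lemma besic_eq' (x y : ℕ → A) : besic x y = limsup (q x y) atTop := besic_eq x y

lemma besic_nonneg (x y : ℕ → A) : 0 ≤ besic x y := by
  rw [besic_eq']
  exact limsup_nonneg (q_nonneg x y) (q_le_one x y)

lemma besic_evzero {x y : ℕ → A} {N : ℕ} (h : ∀ t, N ≤ t → x t = y t) : besic x y = 0 := by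
  refine le_antisymm ?_ (besic_nonneg x y)
  rw [besic_eq']
  have h2 : limsup (q x y) atTop ≤ limsup (fun _ : ℕ => (0:ℝ)) atTop := by
    apply limsup_le_of_le_add_tendsto (q_nonneg x y) (fun _ => le_refl 0) (fun _ => zero_le_one)
      (tendsto_const_div_atTop_nhds_zero_nat (𝕜 := ℝ) N)
    intro l
    unfold q
    rcases Nat.eq_zero_or_pos l with h0 | h0
    · simp [h0]
    · rw [zero_add, div_le_div_iff₀ (by exact_mod_cast h0) (by exact_mod_cast h0)]
      have := mism_evzero h l
      push_cast
      nlinarith [this, (Nat.cast_le (α := ℝ)).2 this]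
  simpa using h2

lemma besic_symm (x y : ℕ → A) : besic x y = besic y x := by
  rw [besic_eq', besic_eq']
  congr 1; funext l; unfold q; rw [mism_symm]

lemma besic_triangle (x y z : ℕ → A) : besic x z ≤ besic x y + besic y z := by
  rw [besic_eq', besic_eq', besic_eq']
  apply limsup_le_add' (q_nonneg x z) (q_nonneg x y) (q_le_one x y) (q_nonneg y z) (q_le_one y z)
  intro l
  unfold q
  rw [← add_div]
  rcases Nat.eq_zero_or_pos l with h0 | h0
  · simp [h0]
  · have hl : (0:ℝ) < l := by exact_mod_cast h0
    rw [div_le_div_iff_of_pos_right hl]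
    exact_mod_cast mism_triangle x y z l

lemma besic_sh_le (x y : ℕ → A) (a : ℕ) : besic (sh a x) (sh a y) ≤ besic x y := by
  rw [besic_eq', besic_eq']
  apply limsup_le_of_le_add_tendsto (q_nonneg _ _) (q_nonneg x y) (q_le_one x y)
    (tendsto_const_div_atTop_nhds_zero_nat (𝕜 := ℝ) a)
  intro l
  unfold q
  rcases Nat.eq_zero_or_pos l with h0 | h0
  · simp [h0]
  · rw [← add_div, div_le_div_iff₀ (by exact_mod_cast h0) (by exact_mod_cast h0)]
    have h1 : mism (sh a x) (sh a y) l ≤ mism x y l + a :=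
      (mism_sh_le x y a l).trans (mism_add_le x y l a)
    have h2 := (Nat.cast_le (α := ℝ)).2 h1
    push_cast at h2 ⊢
    nlinarith

lemma besic_le_sh (x y : ℕ → A) (a : ℕ) : besic x y ≤ besic (sh a x) (sh a y) := by
  rw [besic_eq', besic_eq']
  apply limsup_le_of_le_add_tendsto (q_nonneg _ _) (q_nonneg _ _) (q_le_one _ _)
    (tendsto_const_div_atTop_nhds_zero_nat (𝕜 := ℝ) a)
  intro l
  unfold q
  rcases Nat.eq_zero_or_pos l with h0 | h0
  · simp [h0]
  · rw [← add_div, div_le_div_iff₀ (by exact_mod_cast h0) (by exact_mod_cast h0)]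
    have h1 : mism x y l ≤ mism (sh a x) (sh a y) l + a :=
      (mism_mono x y (Nat.le_add_right l a)).trans (mism_le_sh x y a l)
    have h2 := (Nat.cast_le (α := ℝ)).2 h1
    push_cast at h2 ⊢
    nlinarith

lemma per_iter {c : ℕ → A} {L : ℕ} (hper : ∀ t, c (t + L) = c t) :
    ∀ (j t : ℕ), c (t + j * L) = c t := by
  intro j
  induction j with
  | zero => simp
  | succ n ih =>
    intro t
    have : t + (n + 1) * L = (t + L) + n * L := by ring
    rw [this, ih (t + L), hper t]

lemma besic_per_eq {c : ℕ → A} {L d : ℕ} (hL : 1 ≤ L) (hper : ∀ t, c (t + L) = c t)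
    (h : besic c (sh d c) = 0) : ∀ t, c t = c (t + d) := by
  intro t0
  by_contra hne
  have hmism : ∀ J : ℕ, J + 1 ≤ mism c (sh d c) (t0 + J * L + 1) := by
    intro J
    have hsub : (Finset.range (J+1)).image (fun j => t0 + j * L) ⊆
        (Finset.range (t0 + J * L + 1)).filter (fun i => c i ≠ sh d c i) := by
      intro i hi
      simp only [Finset.mem_image, Finset.mem_range, Finset.mem_filter] at *
      rcases hi with ⟨j, hj, rfl⟩
      have hjJ : j * L ≤ J * L := Nat.mul_le_mul_right L (by omega)
      refine ⟨by omega, ?_⟩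
      show c (t0 + j * L) ≠ sh d c (t0 + j * L)
      rw [per_iter hper j t0]
      show c t0 ≠ c (t0 + j * L + d)
      have : t0 + j * L + d = (t0 + d) + j * L := by ring
      rw [this, per_iter hper j (t0 + d)]
      exact hne
    have hcard : ((Finset.range (J+1)).image (fun j => t0 + j * L)).card = J + 1 := by
      rw [Finset.card_image_of_injective _ ?_, Finset.card_range]
      intro a b hab
      simp only at hab
      have : a * L = b * L := by omega
      exact Nat.eq_of_mul_eq_mul_right (by omega) this
    calc J + 1 = _ := hcard.symm
      _ ≤ _ := Finset.card_le_card hsub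
  have hfreq : ∃ᶠ l in atTop, 1 / (2 * (L:ℝ)) ≤ q c (sh d c) l := by
    rw [frequently_atTop]
    intro b
    set J := max b t0 with hJ
    refine ⟨t0 + J * L + 1, ?_, ?_⟩
    · have h1 : J ≤ J * L := Nat.le_mul_of_pos_right J (by omega)
      have h2 : b ≤ J := le_max_left b t0
      omega
    · have hl : (0:ℝ) < (t0 + J * L + 1 : ℕ) := by positivity
      have step1 : ((J:ℝ) + 1) / ((t0 + J * L + 1 : ℕ) : ℝ) ≤ q c (sh d c) (t0 + J * L + 1) := by
        unfold q
        rw [div_le_div_iff_of_pos_right hl]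
        exact_mod_cast hmism J
      refine le_trans ?_ step1
      rw [div_le_div_iff₀ (by positivity) hl]
      have hJt0 : (t0 : ℝ) ≤ (J : ℝ) := by exact_mod_cast le_max_right b t0
      have hL1 : (1:ℝ) ≤ (L:ℝ) := by exact_mod_cast hL
      push_cast
      nlinarith [hJt0, hL1, mul_le_mul_of_nonneg_left hL1 (by positivity : (0:ℝ) ≤ (J:ℝ))]
  have h0 : 1 / (2 * (L:ℝ)) ≤ limsup (q c (sh d c)) atTop :=
    le_limsup_of_frequently_le hfreq (bddle (q_le_one _ _))
  rw [← besic_eq', h] at h0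
  have : (0:ℝ) < 1 / (2 * (L:ℝ)) := by positivity
  linarith

section Dill
variable {s : ℕ} {f : (Fin s → A) → List A} {F : (ℕ → A) → ℕ → A}

lemma cocycle_succ (x : ℕ → A) (n : ℕ) :
    cocycle f x (n + 1) = cocycle f x n + (f (window x n s)).length :=
  Finset.sum_range_succ _ n

lemma len_pos (hf : ∀ u, f u ≠ []) (u : Fin s → A) : 0 < (f u).length :=
  List.length_pos_iff.mpr (hf u)

lemma cocycle_mono (x : ℕ → A) {m n : ℕ} (h : m ≤ n) : cocycle f x m ≤ cocycle f x n := by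
  unfold cocycle
  exact Finset.sum_le_sum_of_subset (Finset.range_subset_range.2 h)

lemma le_cocycle (hf : ∀ u, f u ≠ []) (x : ℕ → A) (n : ℕ) : n ≤ cocycle f x n := by
  induction n with
  | zero => simp
  | succ m ih =>
    rw [cocycle_succ]
    have := len_pos hf (window x m s)
    omega

lemma cocycle_repr (hf : ∀ u, f u ≠ []) (x : ℕ → A) (t : ℕ) :
    ∃ n k, t = cocycle f x n + k ∧ k < (f (window x n s)).length := by
  induction t with
  | zero => exact ⟨0, 0, by simp [cocycle], len_pos hf _⟩
  | succ t ih =>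
    obtain ⟨n, k, ht, hk⟩ := ih
    by_cases h : k + 1 < (f (window x n s)).length
    · exact ⟨n, k + 1, by omega, h⟩
    · refine ⟨n + 1, 0, ?_, len_pos hf _⟩
      rw [cocycle_succ]
      omega

lemma window_congr {x y : ℕ → A} {n : ℕ} (h : ∀ i, n ≤ i → i < n + s → x i = y i) :
    window x n s = window y n s := by
  funext k
  exact h (n + k) (by omega) (by omega)

lemma window_sh (x : ℕ → A) (p n : ℕ) : window (sh p x) n s = window x (p + n) s := by
  funext k
  show x (n + ↑k + p) = x (p + n + ↑k)
  congr 1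
  omega

lemma cocycle_sh (x : ℕ → A) (p n : ℕ) :
    cocycle f x (p + n) = cocycle f x p + cocycle f (sh p x) n := by
  induction n with
  | zero => simp [cocycle]
  | succ m ih =>
    have h1 : p + (m + 1) = (p + m) + 1 := by omega
    rw [h1, cocycle_succ, ih, cocycle_succ, window_sh]
    omega

lemma F_eval (hF : IsDillVia f F) (x : ℕ → A) {t n k : ℕ}
    (ht : t = cocycle f x n + k) (hk : k < (f (window x n s)).length) :
    F x t = (f (window x n s)).get ⟨k, hk⟩ := by
  subst ht; exact hF x n k hk

lemma get_congr {l l' : List A} (h : l = l') {k : ℕ} (hk : k < l.length)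
    (hk' : k < l'.length) : l.get ⟨k, hk⟩ = l'.get ⟨k, hk'⟩ := by subst h; rfl

lemma F_sh (hF : IsDillVia f F) (hf : ∀ u, f u ≠ []) (x : ℕ → A) (p r : ℕ) :
    F x (cocycle f x p + r) = F (sh p x) r := by
  obtain ⟨n, k, hr, hk⟩ := cocycle_repr hf (sh p x) r
  rw [F_eval hF (sh p x) hr hk]
  have hw : window (sh p x) n s = window x (p + n) s := window_sh x p n
  have hk' : k < (f (window x (p + n) s)).length := by rw [← hw]; exact hk
  have h1 : F x (cocycle f x p + r) = (f (window x (p + n) s)).get ⟨k, hk'⟩ := by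
    refine F_eval hF x ?_ hk'
    rw [hr, cocycle_sh]
    omega
  rw [h1]
  exact (get_congr (congrArg f hw) hk hk').symm

lemma cocycle_congr {x y : ℕ → A} (h : ∀ j, j < n → window x j s = window y j s) :
    cocycle f x n = cocycle f y n := by
  unfold cocycle
  apply Finset.sum_congr rfl
  intro j hj
  rw [h j (Finset.mem_range.1 hj)]

lemma F_congr_prefix (hF : IsDillVia f F) (hf : ∀ u, f u ≠ []) {x y : ℕ → A} {n : ℕ}
    (h : ∀ j, j ≤ n → window x j s = window y j s) :
    ∀ t, t < cocycle f x (n + 1) → F x t = F y t := by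
  intro t ht
  obtain ⟨m, k, htm, hk⟩ := cocycle_repr hf x t
  have hmn : m ≤ n := by
    by_contra hmn
    have : cocycle f x (n + 1) ≤ cocycle f x m := cocycle_mono x (by omega)
    omega
  have hceq : cocycle f x m = cocycle f y m :=
    cocycle_congr (fun j hj => h j (by omega))
  have hw : window x m s = window y m s := h m hmn
  have hk' : k < (f (window y m s)).length := by rw [← hw]; exact hk
  rw [F_eval hF x htm hk]
  have h2 : F y t = (f (window y m s)).get ⟨k, hk'⟩ := F_eval hF y (by omega) hk'
  rw [h2]
  exact get_congr (congrArg f hw) hk hk'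

lemma F_periodic (hF : IsDillVia f F) (hf : ∀ u, f u ≠ []) {x : ℕ → A} {L : ℕ}
    (hper : ∀ t, x (t + L) = x t) (t : ℕ) :
    F x (t + cocycle f x L) = F x t := by
  have hshx : sh L x = x := funext hper
  obtain ⟨n, k, ht, hk⟩ := cocycle_repr hf x t
  have hw : window x (L + n) s = window x n s :=
    (window_sh x L n).symm.trans (congrArg (fun z => window z n s) hshx)
  have hk' : k < (f (window x (L + n) s)).length := by rw [hw]; exact hk
  have h1 : F x (t + cocycle f x L) = (f (window x (L + n) s)).get ⟨k, hk'⟩ := by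
    refine F_eval hF x ?_ hk'
    have h2 : cocycle f x (L + n) = cocycle f x L + cocycle f x n := by
      rw [cocycle_sh, hshx]
    omega
  rw [h1, F_eval hF x ht hk]
  exact get_congr (congrArg f hw) hk' hk

lemma window_ev {x y : ℕ → A} {N : ℕ} (h : ∀ t, N ≤ t → x t = y t) {n : ℕ} (hn : N ≤ n) :
    window x n s = window y n s :=
  window_congr (fun i hi _ => h i (le_trans hn hi))

lemma cocycle_diff_const {x y : ℕ → A} {N : ℕ} (h : ∀ t, N ≤ t → x t = y t) {n : ℕ}
    (hn : N ≤ n) :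
    (cocycle f x n : ℤ) - cocycle f y n = (cocycle f x N : ℤ) - cocycle f y N := by
  induction n, hn using Nat.le_induction with
  | base => rfl
  | succ m hm ih =>
    rw [cocycle_succ, cocycle_succ, window_ev h hm]
    push_cast
    omega

lemma key_shift_aux (hWD : ∀ x y : ℕ → A, besic x y = 0 → besic (F x) (F y) = 0)
    (hF : IsDillVia f F) (hf : ∀ u, f u ≠ [])
    (x y : ℕ → A) (N : ℕ) (hxy : ∀ t, N ≤ t → x t = y t)
    (hle : cocycle f y N ≤ cocycle f x N)
    (z : ℕ → A) (Nx : ℕ) (hxz : ∀ t, Nx ≤ t → x t = z t)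
    (Ny : ℕ) (hyz : ∀ t, Ny ≤ t → y t = z t) :
    besic (F z) (sh (cocycle f x N - cocycle f y N) (F z)) = 0 := by
  set d := cocycle f x N - cocycle f y N with hd
  have hkey : ∀ τ, cocycle f y N ≤ τ → F y τ = F x (τ + d) := by
    intro τ hτ
    obtain ⟨n, k, hτn, hk⟩ := cocycle_repr hf y τ
    have hnN : N ≤ n := by
      by_contra hcon
      have h1 : cocycle f y (n + 1) ≤ cocycle f y N := cocycle_mono y (by omega)
      have h2 := cocycle_succ (f := f) y n
      omega
    have hw : window y n s = window x n s := (window_ev hxy hnN).symm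
    have hcd : cocycle f x n = cocycle f y n + d := by
      have h1 := cocycle_diff_const (f := f) hxy hnN
      omega
    have hk' : k < (f (window x n s)).length := by rw [← hw]; exact hk
    rw [F_eval hF y hτn hk]
    have h3 : F x (τ + d) = (f (window x n s)).get ⟨k, hk'⟩ := F_eval hF x (by omega) hk'
    rw [h3]
    exact get_congr (congrArg f hw) hk hk'
  have hbzy : besic (F z) (F y) = 0 := by
    rw [besic_symm]
    exact hWD y z (besic_evzero hyz)
  have hbxy : besic (F x) (F y) = 0 := hWD x y (besic_evzero hxy)
  have hev : besic (sh d (F x)) (F y) = 0 :=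
    besic_evzero (N := cocycle f y N) (fun τ hτ => (hkey τ hτ).symm)
  have h1 : besic (F y) (sh d (F y)) ≤ 0 := by
    have t1 := besic_triangle (F y) (sh d (F x)) (sh d (F y))
    have t2 : besic (sh d (F x)) (sh d (F y)) ≤ besic (F x) (F y) := besic_sh_le _ _ _
    have t3 : besic (F y) (sh d (F x)) = 0 := by rw [besic_symm]; exact hev
    linarith
  have h2 : besic (F z) (sh d (F z)) ≤ 0 := by
    have t1 := besic_triangle (F z) (F y) (sh d (F z))
    have t2 := besic_triangle (F y) (sh d (F y)) (sh d (F z))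
    have t3 : besic (sh d (F y)) (sh d (F z)) ≤ besic (F y) (F z) := besic_sh_le _ _ _
    have t4 : besic (F y) (F z) = 0 := by rw [besic_symm]; exact hbzy
    linarith
  exact le_antisymm h2 (besic_nonneg _ _)

lemma key_shift (hWD : ∀ x y : ℕ → A, besic x y = 0 → besic (F x) (F y) = 0)
    (hF : IsDillVia f F) (hf : ∀ u, f u ≠ [])
    (x y : ℕ → A) (N : ℕ) (hxy : ∀ t, N ≤ t → x t = y t)
    (z : ℕ → A) (Nx : ℕ) (hxz : ∀ t, Nx ≤ t → x t = z t)
    (Ny : ℕ) (hyz : ∀ t, Ny ≤ t → y t = z t) :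
    besic (F z) (sh ((cocycle f x N : ℤ) - cocycle f y N).natAbs (F z)) = 0 := by
  rcases le_total (cocycle f y N) (cocycle f x N) with hle | hle
  · have hnat : ((cocycle f x N : ℤ) - cocycle f y N).natAbs
        = cocycle f x N - cocycle f y N := by omega
    rw [hnat]
    exact key_shift_aux hWD hF hf x y N hxy hle z Nx hxz Ny hyz
  · have hnat : ((cocycle f x N : ℤ) - cocycle f y N).natAbs
        = cocycle f y N - cocycle f x N := by omega
    rw [hnat]
    exact key_shift_aux hWD hF hf y x N (fun t ht => (hxy t ht).symm) hle z Ny hyz Nx hxz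

lemma sh_sh (w : ℕ → A) (a b : ℕ) : sh a (sh b w) = sh (a + b) w := by
  funext t
  show w (t + a + b) = w (t + (a + b))
  congr 1
  omega

lemma shiftinv_add {w : ℕ → A} {a b : ℕ} (ha : besic w (sh a w) = 0)
    (hb : besic w (sh b w) = 0) : besic w (sh (a + b) w) = 0 := by
  refine le_antisymm ?_ (besic_nonneg _ _)
  have t1 := besic_triangle w (sh a w) (sh (a + b) w)
  have t2 : besic (sh a w) (sh (a + b) w) ≤ besic w (sh b w) := by
    have : sh (a + b) w = sh a (sh b w) := (sh_sh w a b).symm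
    rw [this]
    exact besic_sh_le _ _ _
  linarith

lemma shiftinv_sub {w : ℕ → A} {a b : ℕ} (hab : b ≤ a) (ha : besic w (sh a w) = 0)
    (hb : besic w (sh b w) = 0) : besic w (sh (a - b) w) = 0 := by
  refine le_antisymm ?_ (besic_nonneg _ _)
  have h0 : besic w (sh (a - b) w) ≤ besic (sh b w) (sh b (sh (a - b) w)) := besic_le_sh _ _ _
  have h1 : sh b (sh (a - b) w) = sh a w := by
    rw [sh_sh]
    have hba : b + (a - b) = a := by omega
    rw [hba]
  rw [h1] at h0
  have t1 := besic_triangle (sh b w) w (sh a w)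
  have t2 : besic (sh b w) w = 0 := by rw [besic_symm]; exact hb
  linarith

lemma sh_zero (w : ℕ → A) : sh 0 w = w := funext (fun t => by simp [sh])

/-- The subgroup of exact shifts `d` under which `w` is Besicovitch-invariant. -/
def SG (w : ℕ → A) : AddSubgroup ℤ where
  carrier := {d : ℤ | besic w (sh d.natAbs w) = 0}
  zero_mem' := by
    show besic w (sh (0:ℤ).natAbs w) = 0
    simp only [Int.natAbs_zero, sh_zero]
    exact besic_evzero (N := 0) (fun t _ => rfl)
  add_mem' := by
    intro a b ha hb
    simp only [Set.mem_setOf_eq] at *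
    have hcase : ((a + b).natAbs = a.natAbs + b.natAbs)
        ∨ ((a + b).natAbs = a.natAbs - b.natAbs ∧ b.natAbs ≤ a.natAbs)
        ∨ ((a + b).natAbs = b.natAbs - a.natAbs ∧ a.natAbs ≤ b.natAbs) := by omega
    rcases hcase with h | ⟨h, hle⟩ | ⟨h, hle⟩
    · rw [h]; exact shiftinv_add ha hb
    · rw [h]; exact shiftinv_sub hle ha hb
    · rw [h]; exact shiftinv_sub hle hb ha
  neg_mem' := by
    intro a ha
    simpa only [Set.mem_setOf_eq, Int.natAbs_neg] using ha

lemma F_per_of_shiftinv (hF : IsDillVia f F) (hf : ∀ u, f u ≠ []) {κ : ℕ}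
    (hinv : ∀ z : ℕ → A, besic (F z) (sh κ (F z)) = 0) (z : ℕ → A) (t : ℕ) :
    F z t = F z (t + κ) := by
  set K := t + κ + s + 1 with hK
  set zt := fun i => z (i % K) with hzt
  have hKpos : 0 < K := by omega
  have hper : ∀ i, zt (i + K) = zt i := by
    intro i
    simp only [hzt, Nat.add_mod_right]
  have hΛ : 1 ≤ cocycle f zt K := le_trans hKpos (le_cocycle hf zt K)
  have hex : ∀ τ, F zt τ = F zt (τ + κ) :=
    besic_per_eq hΛ (F_periodic hF hf hper) (hinv zt)
  have hwin : ∀ j, j ≤ K - s → window z j s = window zt j s := by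
    intro j hj
    funext k
    show z (j + ↑k) = z ((j + ↑k) % K)
    rw [Nat.mod_eq_of_lt (by omega)]
  have hbound : t + κ + 1 < cocycle f z ((K - s) + 1) := by
    have := le_cocycle hf z ((K - s) + 1)
    omega
  have h1 : F z t = F zt t :=
    F_congr_prefix hF hf (fun j hj => hwin j hj) t (by omega)
  have h2 : F z (t + κ) = F zt (t + κ) :=
    F_congr_prefix hF hf (fun j hj => hwin j hj) (t + κ) (by omega)
  rw [h1, h2]
  exact hex t

/-- Generators: context-free template deltas and anchored (prefix) deltas. -/
def Gens (f : (Fin s → A) → List A) : Set ℤ :=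
  {δ | ∃ x y : ℕ → A, ∃ e : ℕ, (∀ i, i < s - 1 → x i = y i) ∧ (∀ i, e ≤ i → x i = y i) ∧
      δ = (cocycle f x e : ℤ) - cocycle f y e}
  ∪ {δ | ∃ x y : ℕ → A, (∀ i, s - 1 ≤ i → x i = y i) ∧
      δ = (cocycle f x (s - 1) : ℤ) - cocycle f y (s - 1)}

lemma gens_sub_SG (hs : 1 ≤ s)
    (hWD : ∀ x y : ℕ → A, besic x y = 0 → besic (F x) (F y) = 0)
    (hF : IsDillVia f F) (hf : ∀ u, f u ≠ []) (z : ℕ → A) :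
    Gens f ⊆ (SG (F z) : Set ℤ) := by
  rintro δ (⟨x, y, e, hb, he, rfl⟩ | ⟨x, y, hb, rfl⟩)
  · -- template
    set C := e + s - 1 with hC
    set x' := fun i => if i < C then x i else z i with hx'
    set y' := fun i => if i < C then y i else z i with hy'
    have hxz : ∀ t, C ≤ t → x' t = z t := fun t ht => if_neg (by omega)
    have hyz : ∀ t, C ≤ t → y' t = z t := fun t ht => if_neg (by omega)
    have hagree : ∀ t, e ≤ t → x' t = y' t := by
      intro t ht
      by_cases h : t < C
      · simp only [hx', hy', if_pos h]
        exact he t ht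
      · simp only [hx', hy', if_neg h]
    have hwx : ∀ j, j < e → window x' j s = window x j s := by
      intro j hj
      funext k
      show (if j + (k : ℕ) < C then x (j + k) else z (j + k)) = x (j + k)
      rw [if_pos (by omega)]
    have hwy : ∀ j, j < e → window y' j s = window y j s := by
      intro j hj
      funext k
      show (if j + (k : ℕ) < C then y (j + k) else z (j + k)) = y (j + k)
      rw [if_pos (by omega)]
    have hcx : cocycle f x' e = cocycle f x e := cocycle_congr hwx
    have hcy : cocycle f y' e = cocycle f y e := cocycle_congr hwy
    have := key_shift hWD hF hf x' y' e hagree z C hxz C hyz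
    rw [hcx, hcy] at this
    exact this
  · -- anchored
    set C := 2 * s with hC
    set x' := fun i => if i < C then x i else z i with hx'
    set y' := fun i => if i < C then y i else z i with hy'
    have hxz : ∀ t, C ≤ t → x' t = z t := fun t ht => if_neg (by omega)
    have hyz : ∀ t, C ≤ t → y' t = z t := fun t ht => if_neg (by omega)
    have hagree : ∀ t, s - 1 ≤ t → x' t = y' t := by
      intro t ht
      by_cases h : t < C
      · simp only [hx', hy', if_pos h]
        exact hb t ht
      · simp only [hx', hy', if_neg h]
    have hwx : ∀ j, j < s - 1 → window x' j s = window x j s := by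
      intro j hj
      funext k
      show (if j + (k : ℕ) < C then x (j + k) else z (j + k)) = x (j + k)
      rw [if_pos (by omega)]
    have hwy : ∀ j, j < s - 1 → window y' j s = window y j s := by
      intro j hj
      funext k
      show (if j + (k : ℕ) < C then y (j + k) else z (j + k)) = y (j + k)
      rw [if_pos (by omega)]
    have hcx : cocycle f x' (s - 1) = cocycle f x (s - 1) := cocycle_congr hwx
    have hcy : cocycle f y' (s - 1) = cocycle f y (s - 1) := cocycle_congr hwy
    have := key_shift hWD hF hf x' y' (s - 1) hagree z C hxz C hyz
    rw [hcx, hcy] at this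
    exact this

section Uniform
variable [Nonempty A]

/-- embed a window into an infinite word -/
noncomputable def emb (u : Fin s → A) : ℕ → A :=
  fun i => if h : i < s then u ⟨i, h⟩ else Classical.arbitrary A

lemma emb_window (u : Fin s → A) : window (emb u) 0 s = u := by
  funext k
  show emb u (0 + (k : ℕ)) = u k
  have h : 0 + (k : ℕ) < s := by omega
  simp only [emb, dif_pos h]
  have h2 : (⟨0 + (k : ℕ), h⟩ : Fin s) = k := Fin.ext (by simp)
  rw [h2]

lemma cocycle_split (w : ℕ → A) (n : ℕ) :
    cocycle f w (n + 1)
      = (∑ j ∈ Finset.range n, (f (window w (j + 1) s)).length) + (f (window w 0 s)).length :=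
  Finset.sum_range_succ' _ n

lemma C1 (hs : 1 ≤ s) (hzero : ∀ δ ∈ Gens (s := s) f, δ = 0) :
    ∀ p : ℕ, p < s → ∀ u v : Fin s → A,
      (∀ i : Fin s, (i : ℕ) ≠ p → u i = v i) → (f u).length = (f v).length := by
  intro p
  induction p using Nat.strong_induction_on with
  | _ p IH =>
    intro hp u v huv
    set x := emb u with hx
    set y := emb v with hy
    have hxy : ∀ t, t ≠ p → x t = y t := by
      intro t ht
      by_cases h : t < s
      · simp only [hx, hy, emb, dif_pos h]
        exact huv ⟨t, h⟩ ht
      · simp only [hx, hy, emb, dif_neg h]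
    -- windows with index j ≥ 1 have equal lengths
    have hwin_eq : ∀ j, 1 ≤ j → (f (window x j s)).length = (f (window y j s)).length := by
      intro j hj
      by_cases hjp : p < j
      · have : window x j s = window y j s := by
          funext k
          exact hxy (j + k) (by omega)
        rw [this]
      · -- j ≤ p : windows differ only at coordinate p - j < p
        push_neg at hjp
        refine IH (p - j) (by omega) (by omega) _ _ ?_
        intro i hi
        show x (j + (i : ℕ)) = y (j + (i : ℕ))
        exact hxy (j + i) (by omega)
    have hw0x : window x 0 s = u := emb_window u
    have hw0y : window y 0 s = v := emb_window v
    by_cases hcase : p + 1 < s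
    · -- anchored generator
      have hgen : ((cocycle f x (s - 1) : ℤ) - cocycle f y (s - 1)) ∈ Gens (s := s) f := by
        right
        exact ⟨x, y, fun i hi => hxy i (by omega), rfl⟩
      have h0 := hzero _ hgen
      have hsum : cocycle f x (s - 1) = cocycle f y (s - 1) := by omega
      have hsplit : ∀ w : ℕ → A, cocycle f w (s - 1)
          = (∑ j ∈ Finset.range (s - 2), (f (window w (j + 1) s)).length)
            + (f (window w 0 s)).length := by
        intro w
        have e1 : cocycle f w (s - 1) = cocycle f w ((s - 2) + 1) :=
          congrArg (cocycle f w) (by omega)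
        rw [e1, cocycle_split]
      rw [hsplit x, hsplit y] at hsum
      have hsum2 : (∑ j ∈ Finset.range (s - 2), (f (window x (j + 1) s)).length)
          = ∑ j ∈ Finset.range (s - 2), (f (window y (j + 1) s)).length :=
        Finset.sum_congr rfl (fun j _ => hwin_eq (j + 1) (by omega))
      rw [hw0x, hw0y] at hsum
      omega
    · -- p = s - 1 : template generator with e = s
      have hps : p = s - 1 := by omega
      have hgen : ((cocycle f x s : ℤ) - cocycle f y s) ∈ Gens (s := s) f := by
        left
        exact ⟨x, y, s, fun i hi => hxy i (by omega), fun i hi => hxy i (by omega), rfl⟩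
      have h0 := hzero _ hgen
      have hsum : cocycle f x s = cocycle f y s := by omega
      have hsplit : ∀ w : ℕ → A, cocycle f w s
          = (∑ j ∈ Finset.range (s - 1), (f (window w (j + 1) s)).length)
            + (f (window w 0 s)).length := by
        intro w
        have e1 : cocycle f w s = cocycle f w ((s - 1) + 1) :=
          congrArg (cocycle f w) (by omega)
        rw [e1, cocycle_split]
      rw [hsplit x, hsplit y] at hsum
      have hsum2 : (∑ j ∈ Finset.range (s - 1), (f (window x (j + 1) s)).length)
          = ∑ j ∈ Finset.range (s - 1), (f (window y (j + 1) s)).length :=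
        Finset.sum_congr rfl (fun j _ => hwin_eq (j + 1) (by omega))
      rw [hw0x, hw0y] at hsum
      omega

lemma uniform_of_gens_zero (hs : 1 ≤ s) (hzero : ∀ δ ∈ Gens (s := s) f, δ = 0)
    (u v : Fin s → A) : (f u).length = (f v).length := by
  have key : ∀ (S : Finset (Fin s)) (u v : Fin s → A), (∀ i ∉ S, u i = v i) →
      (f u).length = (f v).length := by
    intro S
    induction S using Finset.induction_on with
    | empty =>
      intro u v h
      have : u = v := funext (fun i => h i (Finset.notMem_empty i))
      rw [this]
    | @insert a S ha IH =>
      intro u v h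
      set u' := Function.update u a (v a) with hu'
      have h1 : (f u).length = (f u').length := by
        apply C1 hs hzero a a.isLt
        intro i hi
        rw [hu', Function.update_of_ne (fun hc => hi (by rw [hc]))]
      have h2 : (f u').length = (f v).length := by
        apply IH
        intro i hiS
        by_cases hia : i = a
        · rw [hia, hu', Function.update_self]
        · rw [hu', Function.update_of_ne hia]
          exact h i (by simp [hia, hiS])
      omega
  exact key Finset.univ u v (fun i hi => absurd (Finset.mem_univ i) hi)

end Uniform

lemma single_change (hs : 1 ≤ s)
    (hF : IsDillVia f F) (hf : ∀ u, f u ≠ [])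
    {g : ℤ} (hKgen : AddSubgroup.closure (Gens (s := s) f) = AddSubgroup.closure {g})
    (hper : ∀ (z : ℕ → A) (t : ℕ), F z t = F z (t + g.natAbs))
    (hgne : g ≠ 0)
    (x y : ℕ → A) (p : ℕ) (hchg : ∀ t, t ≠ p → x t = y t) :
    F x = F y := by
  set κ := g.natAbs with hκ
  have hκpos : 0 < κ := Int.natAbs_pos.mpr hgne
  have hmem : ((cocycle f x (p + 1) : ℤ) - cocycle f y (p + 1))
      ∈ AddSubgroup.closure (Gens (s := s) f) := by
    apply AddSubgroup.subset_closure
    by_cases hcase : p + 1 ≤ s - 1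
    · right
      refine ⟨x, y, fun i hi => hchg i (by omega), ?_⟩
      have := cocycle_diff_const (f := f) (N := p + 1)
        (fun t ht => hchg t (by omega)) hcase
      omega
    · left
      exact ⟨x, y, p + 1, fun i hi => hchg i (by omega), fun i hi => hchg i (by omega), rfl⟩
  obtain ⟨m, hm⟩ : ∃ m : ℤ, (cocycle f x (p + 1) : ℤ) - cocycle f y (p + 1) = m * (κ : ℤ) := by
    rw [hKgen, AddSubgroup.mem_closure_singleton] at hmem
    obtain ⟨n, hn⟩ := hmem
    rcases Int.natAbs_eq g with hg1 | hg1
    · exact ⟨n, by rw [← hn, hg1]; simp [zsmul_eq_mul, hκ]⟩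
    · exact ⟨-n, by rw [← hn, hg1]; simp [zsmul_eq_mul, hκ]⟩
  funext t
  set Ax := cocycle f x (p + 1) with hAx
  set By := cocycle f y (p + 1) with hBy
  set z := sh (p + 1) x with hz
  have hzy : sh (p + 1) y = z := by
    funext i
    show y (i + (p + 1)) = x (i + (p + 1))
    exact (hchg (i + (p + 1)) (by omega)).symm
  have hxr : ∀ r, F x (Ax + r) = F z r := fun r => F_sh hF hf x (p + 1) r
  have hyr : ∀ r, F y (By + r) = F z r := fun r => by rw [← hzy]; exact F_sh hF hf y (p + 1) r
  have hit : ∀ (w : ℕ → A) (τ j : ℕ), F w τ = F w (τ + j * κ) := by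
    intro w τ j
    induction j with
    | zero => simp
    | succ n ih =>
      have he : τ + (n + 1) * κ = (τ + n * κ) + κ := by ring
      rw [he, ih]
      exact hper w (τ + n * κ)
  set N := Ax + By + m.natAbs + t + 1 with hN
  have hNκ : N ≤ N * κ := Nat.le_mul_of_pos_right N hκpos
  set nk := N * κ with hnk
  have hge : Ax ≤ t + nk := by omega
  set r := t + nk - Ax with hr
  have hid2 : t + nk = Ax + r := by omega
  set Mz := (N : ℤ) - m with hMz
  have hMznn : 0 ≤ Mz := by
    rw [hMz]
    have h1 : m ≤ (m.natAbs : ℤ) := Int.le_natAbs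
    have h2 : (m.natAbs : ℤ) ≤ (N : ℤ) := by exact_mod_cast (by omega : m.natAbs ≤ N)
    omega
  set M := Mz.toNat with hM
  have hMcast : (M : ℤ) = (N : ℤ) - m := by rw [hM, Int.toNat_of_nonneg hMznn, hMz]
  set mk := M * κ with hmk
  have hidz : (mk : ℤ) = (nk : ℤ) - m * κ := by
    rw [hmk, hnk]
    push_cast
    rw [hMcast]
    push_cast
    ring
  have hid : t + mk = By + r := by
    have h1 : ((t + mk : ℕ) : ℤ) = ((By + r : ℕ) : ℤ) := by
      have hrz : (r : ℤ) = (t : ℤ) + (nk : ℤ) - (Ax : ℤ) := by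
        rw [hr]
        push_cast [hge]
        ring
      push_cast
      rw [hidz, hrz]
      linarith [hm]
    exact_mod_cast h1
  calc F x t = F x (t + nk) := by rw [hnk]; exact hit x t N
    _ = F z r := by rw [hid2]; exact hxr r
    _ = F y (By + r) := (hyr r).symm
    _ = F y (t + mk) := by rw [hid]
    _ = F y t := by rw [hmk]; exact (hit y t M).symm

lemma finite_change (hs : 1 ≤ s)
    (hF : IsDillVia f F) (hf : ∀ u, f u ≠ [])
    {g : ℤ} (hKgen : AddSubgroup.closure (Gens (s := s) f) = AddSubgroup.closure {g})
    (hper : ∀ (z : ℕ → A) (t : ℕ), F z t = F z (t + g.natAbs))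
    (hgne : g ≠ 0) :
    ∀ (S : Finset ℕ) (x y : ℕ → A), (∀ t ∉ S, x t = y t) → F x = F y := by
  intro S
  induction S using Finset.induction_on with
  | empty =>
    intro x y h
    have : x = y := funext (fun t => h t (Finset.notMem_empty t))
    rw [this]
  | @insert a S ha IH =>
    intro x y h
    set x' := Function.update x a (y a) with hx'
    have h1 : F x = F x' := by
      apply single_change hs hF hf hKgen hper hgne x x' a
      intro t ht
      rw [hx', Function.update_of_ne ht]
    have h2 : F x' = F y := by
      apply IH
      intro t htS
      by_cases hta : t = a
      · rw [hta, hx', Function.update_self]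
      · rw [hx', Function.update_of_ne hta]
        exact h t (by simp [hta, htS])
    rw [h1, h2]

lemma all_eq (hs : 1 ≤ s)
    (hF : IsDillVia f F) (hf : ∀ u, f u ≠ [])
    {g : ℤ} (hKgen : AddSubgroup.closure (Gens (s := s) f) = AddSubgroup.closure {g})
    (hper : ∀ (z : ℕ → A) (t : ℕ), F z t = F z (t + g.natAbs))
    (hgne : g ≠ 0) (x y : ℕ → A) :
    F x = F y := by
  funext t
  set z := fun i => if i < t + s + 1 then y i else x i with hzdef
  have h1 : F x = F z := by
    apply finite_change hs hF hf hKgen hper hgne (Finset.range (t + s + 1))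
    intro τ hτ
    rw [Finset.mem_range] at hτ
    show x τ = if τ < t + s + 1 then y τ else x τ
    rw [if_neg hτ]
  have h2 : F z t = F y t := by
    apply F_congr_prefix hF hf (n := t) ?_ t ?_
    · intro j hj
      funext k
      show (if j + (k:ℕ) < t + s + 1 then y (j + k) else x (j + k)) = y (j + (k:ℕ))
      rw [if_pos (by omega)]
    · have := le_cocycle hf z (t + 1)
      omega
  rw [h1, h2]

lemma uniform_WD (hF : IsDillVia f F) (hf : ∀ u, f u ≠ [])
    (huni : ∀ u v : Fin s → A, (f u).length = (f v).length)
    {x y : ℕ → A} (hxy : besic x y = 0) : besic (F x) (F y) = 0 := by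
  set L := (f (window x 0 s)).length with hLdef
  have hLpos : 0 < L := len_pos hf _
  have hL : ∀ (w : ℕ → A) (n : ℕ), (f (window w n s)).length = L := fun w n => huni _ _
  have hcoc : ∀ (w : ℕ → A) (n : ℕ), cocycle f w n = n * L := by
    intro w n
    induction n with
    | zero => simp [cocycle]
    | succ n ih =>
      rw [cocycle_succ, ih, hL]
      ring
  have hmb : ∀ l, mism (F x) (F y) l ≤ (L * s) * mism x y (l / L + 1 + s) := by
    intro l
    set m := l / L + 1 with hm
    have hsub : (Finset.range l).filter (fun t => F x t ≠ F y t)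
        ⊆ ((Finset.range m).filter (fun n => window x n s ≠ window y n s)).biUnion
            (fun n => Finset.Ico (n * L) (n * L + L)) := by
      intro t ht
      rw [Finset.mem_filter, Finset.mem_range] at ht
      obtain ⟨hl, hne⟩ := ht
      have hdm := Nat.div_add_mod t L
      have hrem : t = (t / L) * L + t % L := by
        rw [Nat.mul_comm]
        omega
      have hremlt : t % L < L := Nat.mod_lt t hLpos
      have hkx : t % L < (f (window x (t / L) s)).length := by rw [hL]; exact hremlt
      have hky : t % L < (f (window y (t / L) s)).length := by rw [hL]; exact hremlt
      have hFx : F x t = (f (window x (t / L) s)).get ⟨t % L, hkx⟩ :=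
        F_eval hF x (by rw [hcoc]; exact hrem) hkx
      have hFy : F y t = (f (window y (t / L) s)).get ⟨t % L, hky⟩ :=
        F_eval hF y (by rw [hcoc]; exact hrem) hky
      have hwne : window x (t / L) s ≠ window y (t / L) s := by
        intro he
        apply hne
        rw [hFx, hFy]
        exact get_congr (congrArg f he) hkx hky
      rw [Finset.mem_biUnion]
      have hdle : t / L ≤ l / L := Nat.div_le_div_right (le_of_lt hl)
      refine ⟨t / L, Finset.mem_filter.mpr ⟨Finset.mem_range.mpr (by omega), hwne⟩,
        Finset.mem_Ico.mpr ⟨by omega, by omega⟩⟩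
    have hcb := Finset.card_le_card hsub
    have hbu : (((Finset.range m).filter (fun n => window x n s ≠ window y n s)).biUnion
            (fun n => Finset.Ico (n * L) (n * L + L))).card
        ≤ ((Finset.range m).filter (fun n => window x n s ≠ window y n s)).card * L := by
      refine (Finset.card_biUnion_le).trans ?_
      rw [Finset.sum_const_nat]
      intro n _
      rw [Nat.card_Ico]
      omega
    have hwb : ((Finset.range m).filter (fun n => window x n s ≠ window y n s)).card
        ≤ s * mism x y (m + s) := by
      have hsub2 : (Finset.range m).filter (fun n => window x n s ≠ window y n s)
          ⊆ (Finset.range s).biUnion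
              (fun i => (Finset.range m).filter (fun n => x (n + i) ≠ y (n + i))) := by
        intro n hn
        rw [Finset.mem_filter] at hn
        obtain ⟨hnm, hwne⟩ := hn
        obtain ⟨k, hk⟩ := Function.ne_iff.mp hwne
        rw [Finset.mem_biUnion]
        exact ⟨(k : ℕ), Finset.mem_range.mpr k.isLt, Finset.mem_filter.mpr ⟨hnm, hk⟩⟩
      refine (Finset.card_le_card hsub2).trans ((Finset.card_biUnion_le).trans ?_)
      have hone : ∀ i ∈ Finset.range s,
          ((Finset.range m).filter (fun n => x (n + i) ≠ y (n + i))).card ≤ mism x y (m + s) := by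
        intro i hi
        rw [Finset.mem_range] at hi
        unfold mism
        apply Finset.card_le_card_of_injOn (fun n => n + i)
        · intro n hn
          simp only [Finset.mem_coe, Finset.mem_filter] at *
          rw [Finset.mem_range] at *
          exact ⟨by omega, hn.2⟩
        · intro a _ b _ hab
          simp only at hab
          omega
      calc (∑ i ∈ Finset.range s,
            ((Finset.range m).filter (fun n => x (n + i) ≠ y (n + i))).card)
          ≤ ∑ i ∈ Finset.range s, mism x y (m + s) := Finset.sum_le_sum hone
        _ = s * mism x y (m + s) := by rw [Finset.sum_const, Finset.card_range, smul_eq_mul]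
    calc mism (F x) (F y) l ≤ _ := hcb
      _ ≤ _ := hbu
      _ ≤ (s * mism x y (m + s)) * L := Nat.mul_le_mul_right L hwb
      _ = (L * s) * mism x y (m + s) := by ring
  -- analysis
  rw [besic_eq']
  have hg0 : Tendsto (fun n => q x y n) atTop (nhds 0) :=
    tendsto_zero_of_limsup_zero (q_nonneg x y) (q_le_one x y) (by rw [← besic_eq']; exact hxy)
  have hml : Tendsto (fun l : ℕ => l / L + 1 + s) atTop atTop := by
    rw [tendsto_atTop_atTop]
    intro b
    refine ⟨b * L, fun l hl => ?_⟩
    have : b ≤ l / L := (Nat.le_div_iff_mul_le hLpos).mpr hl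
    omega
  have hcomp : Tendsto (fun l : ℕ => q x y (l / L + 1 + s)) atTop (nhds 0) := hg0.comp hml
  have hsq : Tendsto (q (F x) (F y)) atTop (nhds 0) := by
    apply squeeze_zero (fun l => q_nonneg _ _ l)
      (g := fun l => ((L : ℝ) * s * (s + 2)) * q x y (l / L + 1 + s)) ?_ ?_
    · intro l
      show q (F x) (F y) l ≤ ((L : ℝ) * s * (s + 2)) * q x y (l / L + 1 + s)
      rcases Nat.eq_zero_or_pos l with rfl | hl
      · have hq0 : q (F x) (F y) 0 = 0 := by unfold q; simp
        rw [hq0]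
        have hqn : (0:ℝ) ≤ q x y (0 / L + 1 + s) := q_nonneg _ _ _
        positivity
      · have hml2 : l / L + 1 + s ≤ (s + 2) * l := by
          have hd : l / L ≤ l := Nat.div_le_self l L
          have hsl : s ≤ s * l := Nat.le_mul_of_pos_right s hl
          have hexp : (s + 2) * l = s * l + 2 * l := by ring
          have h3 : l + 1 + s ≤ (s + 2) * l := by omega
          have h4 : l / L + 1 + s ≤ l + 1 + s :=
            Nat.add_le_add_right (Nat.add_le_add_right hd 1) s
          exact le_trans h4 h3
        have hl' : (0:ℝ) < l := by exact_mod_cast hl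
        have hml' : (0:ℝ) < ((l / L + 1 + s : ℕ) : ℝ) := by
          have h1 : 0 < l / L + 1 + s :=
            Nat.lt_of_lt_of_le Nat.one_pos
              (le_trans (Nat.le_add_left 1 (l / L)) (Nat.le_add_right _ s))
          exact_mod_cast h1
        unfold q
        rw [mul_div_assoc']
        rw [div_le_div_iff₀ hl' hml']
        have c1 : (mism (F x) (F y) l : ℝ) ≤ (L : ℝ) * s * (mism x y (l / L + 1 + s)) := by
          have h2 := hmb l
          push_cast
          exact_mod_cast h2
        have c2 : ((l / L + 1 + s : ℕ) : ℝ) ≤ ((s : ℝ) + 2) * l := by exact_mod_cast hml2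
        have c0 : (0:ℝ) ≤ (mism x y (l / L + 1 + s) : ℝ) := by positivity
        have c3 : (0:ℝ) ≤ (L : ℝ) * s := by positivity
        nlinarith [mul_le_mul_of_nonneg_left c2 (mul_nonneg c3 c0)]
    · have := hcomp.const_mul ((L : ℝ) * s * (s + 2))
      simpa using this
  exact hsq.limsup_eq

end Dill
end DP

/-- A dill map `F` is well-defined on the Besicovitch quotient (i.e. `𝔡_H(x,y) = 0`
implies `𝔡_H(F(x),F(y)) = 0`) if and only if `F` is constant or uniform. -/
theorem dill_besicovitch_wellDefined_iff_constant_or_uniform {A : Type*} [Fintype A]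
    [DecidableEq A] (s : ℕ) (hs : 1 ≤ s)
    (f : (Fin s → A) → List A) (hf : ∀ u, f u ≠ [])
    (F : (ℕ → A) → ℕ → A) (hF : IsDillVia f F) :
    (∀ x y : ℕ → A, besic x y = 0 → besic (F x) (F y) = 0) ↔
      ((∃ c : ℕ → A, ∀ x, F x = c) ∨ ∀ u v : Fin s → A, (f u).length = (f v).length) := by
  constructor
  · intro hWD
    by_cases huni : ∀ u v : Fin s → A, (f u).length = (f v).length
    · exact Or.inr huni
    · left
      rcases isEmpty_or_nonempty A with hA | hA
      · exact absurd (fun u v => ((hA.false (u ⟨0, hs⟩)).elim)) huni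
      haveI := hA
      obtain ⟨g, hg⟩ := Int.subgroup_cyclic (AddSubgroup.closure (DP.Gens (s := s) f))
      have hgne : g ≠ 0 := by
        intro h0
        apply huni
        apply DP.uniform_of_gens_zero hs
        intro δ hδ
        have hmem : δ ∈ AddSubgroup.closure (DP.Gens (s := s) f) :=
          AddSubgroup.subset_closure hδ
        rw [hg, h0] at hmem
        rw [AddSubgroup.mem_closure_singleton] at hmem
        obtain ⟨n, hn⟩ := hmem
        simpa using hn.symm
      have hginv : ∀ z : ℕ → A, besic (F z) (DP.sh g.natAbs (F z)) = 0 := by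
        intro z
        have h1 : g ∈ AddSubgroup.closure (DP.Gens (s := s) f) := by
          rw [hg]
          exact AddSubgroup.subset_closure (Set.mem_singleton g)
        have h2 : AddSubgroup.closure (DP.Gens (s := s) f) ≤ DP.SG (F z) :=
          (AddSubgroup.closure_le _).mpr (DP.gens_sub_SG hs hWD hF hf z)
        exact h2 h1
      have hper : ∀ (z : ℕ → A) (t : ℕ), F z t = F z (t + g.natAbs) :=
        fun z => DP.F_per_of_shiftinv hF hf hginv z
      exact ⟨F (fun _ => Classical.arbitrary A),
        fun x => DP.all_eq hs hF hf hg hper hgne x _⟩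
  · rintro (⟨c, hc⟩ | huni)
    · intro x y _
      rw [hc x, hc y]
      exact DP.besic_evzero (N := 0) (fun t _ => rfl)
    · intro x y hxy
      exact DP.uniform_WD hF hf huni hxy
end

section
/- Let F be a uniform dill map with diameter s, local rule f and common image length |f|, such that s·d_max(f) ≤ |f|. Then for all x, y ∈ A^ℕ and all t ∈ ℕ, 𝔡_H(F^t(x), F^t(y)) ≤ 𝔡_H(x,y). In particular, the induced system on the Besicovitch quotient is equicontinuous. -/
open Filter

/-- `d_max(f) = max_{u,v ∈ A^s} d_H(f(u), f(v))`. -/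
noncomputable def dmaxf {A : Type*} [DecidableEq A] {s : ℕ} (f : (Fin s → A) → List A) : ℕ :=
  sSup {d | ∃ u v : Fin s → A, d = hammingL (f u) (f v)}

set_option linter.unusedSectionVars false

def mism {A : Type*} [DecidableEq A] (x y : ℕ → A) (n : ℕ) : ℕ :=
  ((Finset.range n).filter fun i => x i ≠ y i).card

lemma finset_list_filter (p : ℕ → Prop) [DecidablePred p] (n : ℕ) :
    ((Finset.range n).filter p).card = ((List.range n).filter (fun i => decide (p i))).length := by
  simp [Finset.range, Finset.filter, Multiset.range]

lemma hammingL_factor {A : Type*} [DecidableEq A] (x y : ℕ → A) (n : ℕ) :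
    hammingL (factor x 0 n) (factor y 0 n) = mism x y n := by
  unfold hammingL factor mism
  simp only [List.length_ofFn, max_self]
  rw [finset_list_filter]
  congr 1
  apply List.filter_congr
  intro i hi
  simp only [List.mem_range] at hi
  simp [List.getElem?_ofFn, Fin.ofNat, hi, List.ofFnNthVal, dif_pos]

lemma mism_mono {A : Type*} [DecidableEq A] (x y : ℕ → A) {m n : ℕ} (h : m ≤ n) :
    mism x y m ≤ mism x y n :=
  Finset.card_le_card (Finset.filter_subset_filter _ (Finset.range_subset_range.2 h))

lemma mism_le {A : Type*} [DecidableEq A] (x y : ℕ → A) (n : ℕ) : mism x y n ≤ n := by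
  calc mism x y n ≤ (Finset.range n).card := Finset.card_filter_le _ _
  _ = n := Finset.card_range n

lemma hammingL_le {A : Type*} [DecidableEq A] (u v : List A) :
    hammingL u v ≤ max u.length v.length := by
  calc ((List.range (max u.length v.length)).filter (fun i => u[i]? ≠ v[i]?)).length
      ≤ (List.range (max u.length v.length)).length := List.length_filter_le _ _
    _ = _ := List.length_range

lemma hammingL_self {A : Type*} [DecidableEq A] (u : List A) : hammingL u u = 0 := by
  simp [hammingL, List.filter_eq_nil_iff]

lemma hammingL_le_dmaxf {A : Type*} [Fintype A] [DecidableEq A] {s : ℕ}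
    (f : (Fin s → A) → List A) (u v : Fin s → A) : hammingL (f u) (f v) ≤ dmaxf f := by
  have hset : {d | ∃ u v : Fin s → A, d = hammingL (f u) (f v)}
      = Set.range (fun p : (Fin s → A) × (Fin s → A) => hammingL (f p.1) (f p.2)) := by
    ext d; constructor
    · rintro ⟨a, b, rfl⟩; exact ⟨(a, b), rfl⟩
    · rintro ⟨⟨a, b⟩, rfl⟩; exact ⟨a, b, rfl⟩
  apply le_csSup
  · rw [hset]; exact (Set.finite_range _).bddAbove
  · exact ⟨u, v, rfl⟩

lemma filter_range_add (P : ℕ → Prop) [DecidablePred P] (a b : ℕ) :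
    ((Finset.range (a+b)).filter P).card
      = ((Finset.range a).filter P).card + ((Finset.range b).filter fun k => P (a+k)).card := by
  rw [Finset.range_add, Finset.filter_union, Finset.card_union_of_disjoint, Finset.filter_map,
    Finset.card_map]
  · congr 1
  · rw [Finset.disjoint_left]
    intro p hp hp'
    simp only [Finset.mem_filter, Finset.mem_range, Finset.mem_map,
      Function.Embedding.coeFn_mk, addLeftEmbedding_apply] at hp hp'
    obtain ⟨⟨k, hk, rfl⟩, -⟩ := hp'
    omega

section main
variable {A : Type*} [Fintype A] [DecidableEq A] {s L : ℕ}
  (f : (Fin s → A) → List A) {F : (ℕ → A) → ℕ → A}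

lemma cocycle_unif (hunif : ∀ u, (f u).length = L) (x : ℕ → A) (n : ℕ) :
    cocycle f x n = n * L := by
  simp [cocycle, hunif]

lemma block_eq (hunif : ∀ u, (f u).length = L) (hF : IsDillVia f F)
    (x y : ℕ → A) (j : ℕ) :
    ((Finset.range L).filter fun k => F x (j*L+k) ≠ F y (j*L+k)).card
      = hammingL (f (window x j s)) (f (window y j s)) := by
  unfold hammingL
  rw [hunif, hunif, max_self, finset_list_filter]
  congr 1
  apply List.filter_congr
  intro k hk
  simp only [List.mem_range] at hk
  have hkx : k < (f (window x j s)).length := by rw [hunif]; exact hk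
  have hky : k < (f (window y j s)).length := by rw [hunif]; exact hk
  have ex := hF x j k hkx
  have ey := hF y j k hky
  rw [cocycle_unif f hunif] at ex ey
  rw [ex, ey, List.getElem?_eq_getElem hkx, List.getElem?_eq_getElem hky]
  simp

lemma mism_F_blocks (hunif : ∀ u, (f u).length = L) (hF : IsDillVia f F)
    (x y : ℕ → A) (N : ℕ) :
    mism (F x) (F y) (N * L)
      = ∑ j ∈ Finset.range N, hammingL (f (window x j s)) (f (window y j s)) := by
  induction N with
  | zero => simp [mism]
  | succ N ih =>
    rw [Finset.sum_range_succ, ← ih, Nat.succ_mul]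
    unfold mism
    rw [filter_range_add, block_eq f hunif hF]

lemma sum_blocks_le (x y : ℕ → A) (N : ℕ) :
    ∑ j ∈ Finset.range N, hammingL (f (window x j s)) (f (window y j s))
      ≤ dmaxf f * ((Finset.range N).filter fun j => window x j s ≠ window y j s).card := by
  rw [Finset.card_eq_sum_ones, Finset.mul_sum]
  rw [← Finset.sum_filter_add_sum_filter_not (Finset.range N)
    (fun j => window x j s ≠ window y j s)]
  have h2 : ∑ j ∈ (Finset.range N).filter (fun j => ¬ window x j s ≠ window y j s),
      hammingL (f (window x j s)) (f (window y j s)) = 0 := by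
    apply Finset.sum_eq_zero
    intro j hj
    simp only [Finset.mem_filter, not_not] at hj
    rw [hj.2, hammingL_self]
  rw [h2, add_zero]
  apply Finset.sum_le_sum
  intro j _
  rw [mul_one]
  exact hammingL_le_dmaxf f _ _

lemma bad_windows_le (hs : 1 ≤ s) (x y : ℕ → A) (N : ℕ) :
    ((Finset.range N).filter fun j => window x j s ≠ window y j s).card
      ≤ s * mism x y (N + s) := by
  have hsub : ((Finset.range N).filter fun j => window x j s ≠ window y j s)
      ⊆ ((Finset.range (N+s)).filter fun i => x i ≠ y i).biUnion
          (fun i => Finset.Icc (i+1-s) i) := by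
    intro j hj
    simp only [Finset.mem_filter, Finset.mem_range] at hj
    obtain ⟨hjN, hw⟩ := hj
    rw [Function.ne_iff] at hw
    obtain ⟨k, hk⟩ := hw
    simp only [Finset.mem_biUnion, Finset.mem_filter, Finset.mem_range, Finset.mem_Icc]
    refine ⟨j + k, ⟨by have := k.2; omega, hk⟩, by have := k.2; omega, by omega⟩
  calc ((Finset.range N).filter fun j => window x j s ≠ window y j s).card
      ≤ _ := Finset.card_le_card hsub
    _ ≤ ∑ i ∈ (Finset.range (N+s)).filter fun i => x i ≠ y i, (Finset.Icc (i+1-s) i).card :=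
        Finset.card_biUnion_le
    _ ≤ ∑ i ∈ (Finset.range (N+s)).filter fun i => x i ≠ y i, s := by
        apply Finset.sum_le_sum
        intro i _
        rw [Nat.card_Icc]
        omega
    _ = mism x y (N + s) * s := by rw [Finset.sum_const, smul_eq_mul]; rfl
    _ = s * mism x y (N + s) := mul_comm _ _

lemma key_bound (hs : 1 ≤ s) (hunif : ∀ u, (f u).length = L) (hcond : s * dmaxf f ≤ L)
    (hF : IsDillVia f F) (x y : ℕ → A) (N : ℕ) :
    mism (F x) (F y) (N * L) ≤ L * mism x y (N + s) := by
  calc mism (F x) (F y) (N * L)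
      = ∑ j ∈ Finset.range N, hammingL (f (window x j s)) (f (window y j s)) :=
        mism_F_blocks f hunif hF x y N
    _ ≤ dmaxf f * ((Finset.range N).filter fun j => window x j s ≠ window y j s).card :=
        sum_blocks_le f x y N
    _ ≤ dmaxf f * (s * mism x y (N + s)) :=
        Nat.mul_le_mul_left _ (bad_windows_le hs x y N)
    _ = (s * dmaxf f) * mism x y (N + s) := by ring
    _ ≤ L * mism x y (N + s) := Nat.mul_le_mul_right _ hcond

end main


section anal
variable {A : Type*} [DecidableEq A]

lemma besic_eq_limsup_mism (x y : ℕ → A) :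
    besic x y = limsup (fun l : ℕ => (mism x y l : ℝ) / l) atTop := by
  unfold besic
  congr 1
  funext l
  rw [hammingL_factor]

lemma ratio_nonneg (x y : ℕ → A) (l : ℕ) : 0 ≤ (mism x y l : ℝ) / l := by positivity

lemma ratio_le_one (x y : ℕ → A) (l : ℕ) : (mism x y l : ℝ) / l ≤ 1 := by
  rcases Nat.eq_zero_or_pos l with h | h
  · simp [h]
  · rw [div_le_one (by exact_mod_cast h)]
    exact_mod_cast mism_le x y l

lemma ratio_bddAbove (x y : ℕ → A) :
    IsBoundedUnder (· ≤ ·) atTop (fun l : ℕ => (mism x y l : ℝ) / l) :=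
  isBoundedUnder_of ⟨1, fun l => ratio_le_one x y l⟩

lemma ratio_cobdd (x y : ℕ → A) :
    IsCoboundedUnder (· ≤ ·) atTop (fun l : ℕ => (mism x y l : ℝ) / l) :=
  isCoboundedUnder_le_of_le atTop (ratio_nonneg x y)

lemma besic_nonneg (x y : ℕ → A) : 0 ≤ besic x y := by
  rw [besic_eq_limsup_mism]
  exact le_limsup_of_frequently_le (Frequently.of_forall (ratio_nonneg x y)) (ratio_bddAbove x y)

lemma besic_le_one (x y : ℕ → A) : besic x y ≤ 1 := by
  rw [besic_eq_limsup_mism]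
  exact limsup_le_of_le (ratio_cobdd x y) (Eventually.of_forall (ratio_le_one x y))

/-- one-step contraction, assuming the key combinatorial bound -/
lemma besic_step {L s : ℕ} (hL : 1 ≤ L) (x y : ℕ → A) (Fx Fy : ℕ → A)
    (key : ∀ N : ℕ, mism Fx Fy (N * L) ≤ L * mism x y (N + s)) :
    besic Fx Fy ≤ besic x y := by
  apply le_of_forall_pos_le_add
  intro ε hε
  set D := besic x y with hD
  have hD0 : 0 ≤ D := besic_nonneg x y
  set c' : ℝ := D + ε / 2 with hc'
  have hc'0 : 0 < c' := by positivity
  have hlt : limsup (fun l : ℕ => (mism x y l : ℝ) / l) atTop < c' := by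
    rw [← besic_eq_limsup_mism, ← hD, hc']
    linarith
  have hev := eventually_lt_of_limsup_lt hlt (ratio_bddAbove x y)
  obtain ⟨n₀, hn₀⟩ := eventually_atTop.1 hev
  obtain ⟨N₀, hN₀⟩ := exists_nat_ge (c' * (1 + s) / (ε / 2))
  rw [besic_eq_limsup_mism]
  apply limsup_le_of_le (ratio_cobdd Fx Fy)
  rw [eventually_atTop]
  refine ⟨(n₀ + N₀ + s + 1) * L + L, fun ℓ hℓ => ?_⟩
  have hLpos : 0 < L := hL
  set M : ℕ := ℓ / L with hM
  have hMbig : n₀ + N₀ + s + 1 ≤ M := Nat.le_div_iff_mul_le hLpos |>.2 (by omega)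
  have hℓpos : 0 < ℓ := by omega
  set N : ℕ := M + 1 with hN
  have hℓle : ℓ ≤ N * L := by
    have : ℓ / L < N := by omega
    have := (Nat.div_lt_iff_lt_mul hLpos).1 this
    omega
  have hMLle : M * L ≤ ℓ := Nat.div_mul_le_self ℓ L
  -- mism bound at N + s
  have hns : n₀ ≤ N + s := by omega
  have h1 : (mism x y (N + s) : ℝ) ≤ c' * ((N : ℝ) + s) := by
    have t := hn₀ (N + s) hns
    have hpos : (0:ℝ) < ((N + s : ℕ) : ℝ) := by positivity
    rw [div_lt_iff₀ hpos] at t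
    calc (mism x y (N + s) : ℝ) ≤ c' * ((N + s : ℕ) : ℝ) := t.le
      _ = c' * ((N : ℝ) + s) := by push_cast; ring
  -- natural chain
  have h2 : (mism Fx Fy ℓ : ℝ) ≤ (L : ℝ) * mism x y (N + s) := by
    exact_mod_cast Nat.le_trans (mism_mono Fx Fy hℓle) (key N)
  have h3 : c' * ((N : ℝ) + s) ≤ (D + ε) * M := by
    have hMN : (N : ℝ) + s = (M : ℝ) + (1 + s) := by push_cast [hN]; ring
    rw [hMN, mul_add]
    have hMge : (N₀ : ℝ) ≤ M := by exact_mod_cast (by omega : N₀ ≤ M)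
    have : c' * (1 + (s:ℝ)) ≤ ε / 2 * N₀ := by
      rw [div_le_iff₀ (by positivity)] at hN₀
      linarith
    have h4 : c' * (1 + (s:ℝ)) ≤ ε / 2 * M := by
      calc c' * (1 + (s:ℝ)) ≤ ε / 2 * N₀ := this
        _ ≤ ε / 2 * M := by apply mul_le_mul_of_nonneg_left hMge (by positivity)
    calc c' * (M:ℝ) + c' * (1 + s) ≤ c' * M + ε / 2 * M := by linarith
      _ = (D + ε) * M := by rw [hc']; ring
  have h5 : (mism Fx Fy ℓ : ℝ) ≤ (D + ε) * (M * L) := by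
    calc (mism Fx Fy ℓ : ℝ) ≤ (L : ℝ) * mism x y (N + s) := h2
      _ ≤ (L : ℝ) * (c' * ((N:ℝ) + s)) := by
          exact mul_le_mul_of_nonneg_left h1 (by positivity)
      _ ≤ (L : ℝ) * ((D + ε) * M) := by
          apply mul_le_mul_of_nonneg_left h3 (by positivity)
      _ = (D + ε) * (M * L) := by ring
  have h6 : (mism Fx Fy ℓ : ℝ) ≤ (D + ε) * ℓ := by
    calc (mism Fx Fy ℓ : ℝ) ≤ (D + ε) * (M * L) := h5
      _ ≤ (D + ε) * ℓ := by
          apply mul_le_mul_of_nonneg_left _ (by linarith)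
          exact_mod_cast hMLle
  rw [div_le_iff₀ (by exact_mod_cast hℓpos)]
  exact h6

end anal

/-- If `F` is a uniform dill map with diameter `s`, local rule `f`, common image length `L`,
and `s·d_max(f) ≤ L`, then all iterates `F^t` are `1`-Lipschitz for `𝔡_H`; in particular the
induced system on the Besicovitch quotient is equicontinuous. -/
theorem uniform_dill_besicovitch_equicontinuous {A : Type*} [Fintype A] [DecidableEq A]
    (s L : ℕ) (hs : 1 ≤ s) (hL : 1 ≤ L)
    (f : (Fin s → A) → List A) (hunif : ∀ u, (f u).length = L)
    (hcond : s * dmaxf f ≤ L)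
    (F : (ℕ → A) → ℕ → A) (hF : IsDillVia f F) :
    (∀ (x y : ℕ → A) (t : ℕ), besic (F^[t] x) (F^[t] y) ≤ besic x y) ∧
      (∀ ε : ℝ, 0 < ε → ∃ δ : ℝ, 0 < δ ∧
        ∀ x y : ℕ → A, besic x y < δ → ∀ t : ℕ, besic (F^[t] x) (F^[t] y) < ε) := by
  have key : ∀ x y : ℕ → A, besic (F x) (F y) ≤ besic x y := by
    intro x y
    exact besic_step hL x y (F x) (F y) (fun N => key_bound f hs hunif hcond hF x y N)
  have lip : ∀ (x y : ℕ → A) (t : ℕ), besic (F^[t] x) (F^[t] y) ≤ besic x y := by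
    intro x y t
    induction t generalizing x y with
    | zero => simp
    | succ t ih =>
      rw [Function.iterate_succ_apply, Function.iterate_succ_apply]
      exact le_trans (ih (F x) (F y)) (key x y)
  refine ⟨lip, fun ε hε => ⟨ε, hε, fun x y hxy t => lt_of_le_of_lt (lip x y t) hxy⟩⟩
end

section
/- Let τ be a uniform substitution over A (all images τ(a), a ∈ A, have the same length ‖τ‖) such that d_H(τ(a),τ(b)) = ‖τ‖ for all distinct letters a ≠ b ∈ A. Then τ̄ is an isometry for the Besicovitch pseudometric: 𝔡_H(τ̄(x), τ̄(y)) = 𝔡_H(x,y) for all x, y ∈ A^ℕ. -/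
open Filter

def cnt {A : Type*} [DecidableEq A] (x y : ℕ → A) (n : ℕ) : ℕ :=
  ((List.range n).filter (fun i => x i ≠ y i)).length

lemma hammingL_factor_eq_cnt {A : Type*} [DecidableEq A] (x y : ℕ → A) (n : ℕ) :
    hammingL (factor x 0 n) (factor y 0 n) = cnt x y n := by
  unfold hammingL factor cnt
  simp only [List.length_ofFn, max_self]
  congr 1
  apply List.filter_congr
  intro i hi
  simp only [List.mem_range] at hi
  simp [List.getElem?_ofFn, List.ofFnNthVal, hi]

lemma cnt_mono {A : Type*} [DecidableEq A] (x y : ℕ → A) : Monotone (cnt x y) := by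
  intro m n hmn
  unfold cnt
  obtain ⟨k, rfl⟩ := Nat.exists_eq_add_of_le hmn
  rw [List.range_add, List.filter_append, List.length_append]
  exact Nat.le_add_right _ _

lemma cnt_le {A : Type*} [DecidableEq A] (x y : ℕ → A) (n : ℕ) : cnt x y n ≤ n := by
  unfold cnt
  exact (List.length_filter_le _ _).trans (by simp)

lemma cnt_succ_le {A : Type*} [DecidableEq A] (x y : ℕ → A) (n : ℕ) :
    cnt x y (n + 1) ≤ cnt x y n + 1 := by
  unfold cnt
  rw [List.range_succ, List.filter_append, List.length_append]
  gcongr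
  exact (List.length_filter_le _ _).trans (by simp)

lemma cnt_block {A : Type*} [DecidableEq A] (x y : ℕ → A) (L : ℕ) (hL : 1 ≤ L) (m : ℕ) :
    cnt (fun i => x (i / L)) (fun i => y (i / L)) (m * L) = L * cnt x y m := by
  induction m with
  | zero => simp [cnt]
  | succ m ih =>
    have hstep : ∀ j ∈ (List.range L).map (m * L + ·),
        (decide ¬ x (j / L) = y (j / L)) = decide ¬ x m = y m := by
      intro j hj
      simp only [List.mem_map, List.mem_range] at hj
      obtain ⟨k, hk, rfl⟩ := hj
      have : (m * L + k) / L = m := by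
        rw [add_comm, Nat.add_mul_div_right _ _ (by omega : 0 < L), Nat.div_eq_of_lt hk]
        omega
      rw [this]
    unfold cnt at *
    rw [add_mul, one_mul, List.range_add, List.filter_append, List.length_append, ih,
      List.filter_congr hstep]
    by_cases h : x m = y m
    · simp [List.range_succ, h]
    · simp [List.range_succ, h, List.filter_cons, Nat.mul_add]

lemma marked_get_ne {A : Type*} [DecidableEq A] {u v : List A} {L : ℕ}
    (hu : u.length = L) (hv : v.length = L) (h : hammingL u v = L)
    (k : ℕ) (hk : k < L) : u[k]? ≠ v[k]? := by
  unfold hammingL at h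
  rw [hu, hv, max_self] at h
  have hall : ∀ i ∈ List.range L, (decide (u[i]? ≠ v[i]?)) = true := by
    rw [← List.length_filter_eq_length_iff]
    simpa using h
  simpa using hall k (List.mem_range.mpr hk)

lemma G_ne_iff {A : Type*} [DecidableEq A]
    (τ : A → List A) (L : ℕ) (hL : 1 ≤ L)
    (hunif : ∀ a, (τ a).length = L)
    (hmark : ∀ a b : A, a ≠ b → hammingL (τ a) (τ b) = L)
    (G : (ℕ → A) → ℕ → A)
    (hG : ∀ (z : ℕ → A) (n k : ℕ) (h : k < (τ (z n)).length),
      G z (n * L + k) = (τ (z n)).get ⟨k, h⟩)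
    (x y : ℕ → A) (i : ℕ) :
    (G x i ≠ G y i) ↔ (x (i / L) ≠ y (i / L)) := by
  set n := i / L with hn
  set k := i % L with hk
  have hkL : k < L := Nat.mod_lt _ (by omega)
  have hi : i = n * L + k := by rw [hn, hk]; exact (Nat.div_add_mod' i L).symm
  have hx : G x i = (τ (x n)).get ⟨k, by rw [hunif]; exact hkL⟩ := by
    rw [hi]; exact hG x n k _
  have hy : G y i = (τ (y n)).get ⟨k, by rw [hunif]; exact hkL⟩ := by
    rw [hi]; exact hG y n k _
  have hx' : (τ (x n))[k]? = some (G x i) := by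
    rw [hx, List.getElem?_eq_getElem (by rw [hunif]; exact hkL)]
    simp [List.get_eq_getElem]
  have hy' : (τ (y n))[k]? = some (G y i) := by
    rw [hy, List.getElem?_eq_getElem (by rw [hunif]; exact hkL)]
    simp [List.get_eq_getElem]
  constructor
  · intro h hxy
    apply h
    have h2 : (τ (y n))[k]? = some (G x i) := by rw [← hxy]; exact hx'
    exact Option.some.inj (h2.symm.trans hy')
  · intro h heq
    have hne := marked_get_ne (hunif (x n)) (hunif (y n)) (hmark _ _ h) k hkL
    rw [hx', hy'] at hne
    exact hne (by rw [heq])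

lemma limsup_block_eq (c c' : ℕ → ℕ) (L : ℕ) (hL : 1 ≤ L)
    (hmono : Monotone c') (hblock : ∀ m, c' (m * L) = L * c m)
    (hstep : ∀ m, c (m + 1) ≤ c m + 1)
    (hle : ∀ n, c n ≤ n) (hle' : ∀ n, c' n ≤ n) :
    limsup (fun l : ℕ => (c' l : ℝ) / l) atTop
      = limsup (fun l : ℕ => (c l : ℝ) / l) atTop := by
  set f : ℕ → ℝ := fun l => (c' l : ℝ) / l with hf
  set g : ℕ → ℝ := fun l => (c l : ℝ) / l with hg
  have hf0 : ∀ l, 0 ≤ f l := fun l => by positivity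
  have hg0 : ∀ l, 0 ≤ g l := fun l => by positivity
  have hf1 : ∀ l, f l ≤ 1 := by
    intro l
    rcases Nat.eq_zero_or_pos l with h | h
    · simp [hf, h]
    · rw [hf, div_le_one (by exact_mod_cast h)]
      exact_mod_cast hle' l
  have hg1 : ∀ l, g l ≤ 1 := by
    intro l
    rcases Nat.eq_zero_or_pos l with h | h
    · simp [hg, h]
    · rw [hg, div_le_one (by exact_mod_cast h)]
      exact_mod_cast hle l
  have hfb : IsBoundedUnder (· ≤ ·) atTop f := isBoundedUnder_of ⟨1, hf1⟩
  have hgb : IsBoundedUnder (· ≤ ·) atTop g := isBoundedUnder_of ⟨1, hg1⟩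
  have hfcob : IsCoboundedUnder (· ≤ ·) atTop f :=
    (isBoundedUnder_of (r := (· ≥ ·)) ⟨0, hf0⟩).isCoboundedUnder_le
  have hc0 : c 0 = 0 := Nat.le_zero.mp (hle 0)
  have hL0 : (L : ℝ) ≠ 0 := by
    exact_mod_cast Nat.one_le_iff_ne_zero.mp hL
  have hfg : ∀ m, g m = f (m * L) := by
    intro m
    show (c m : ℝ) / m = (c' (m * L) : ℝ) / ((m * L : ℕ) : ℝ)
    rw [hblock m]
    rcases Nat.eq_zero_or_pos m with rfl | hm
    · simp [hc0]
    · push_cast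
      rw [mul_comm (m : ℝ) (L : ℝ), mul_div_mul_left _ _ hL0]
  apply le_antisymm
  · -- limsup f ≤ limsup g
    rw [le_iff_forall_pos_lt_add]
    intro ε hε
    set B := limsup g atTop with hB
    have hev : ∀ᶠ m in atTop, g m < B + ε / 4 :=
      eventually_lt_of_limsup_lt (by linarith) hgb
    obtain ⟨m₀, hm₀⟩ := eventually_atTop.1 hev
    set Q := max m₀ (max 1 ⌈4 / ε⌉₊) with hQ
    have h1 : limsup f atTop ≤ B + ε / 4 + ε / 4 := by
      apply limsup_le_of_le hfcob
      filter_upwards [eventually_ge_atTop (Q * L)] with ℓ hℓ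
      set q := ℓ / L with hq
      have hqQ : Q ≤ q := (Nat.le_div_iff_mul_le (by omega)).mpr hℓ
      have hq1 : 1 ≤ q := le_trans (le_trans (le_max_left _ _) (le_max_right _ _)) hqQ
      have hℓq1 : q * L ≤ ℓ := Nat.div_mul_le_self ℓ L
      have hℓq2 : ℓ ≤ (q + 1) * L :=
        le_of_lt ((Nat.div_lt_iff_lt_mul (show 0 < L by omega)).mp (Nat.lt_succ_self _))
      have hℓpos : 0 < ℓ := by
        have : 1 * 1 ≤ q * L := Nat.mul_le_mul hq1 hL
        omega
      have hc'le : c' ℓ ≤ L * (c q + 1) := by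
        calc c' ℓ ≤ c' ((q + 1) * L) := hmono hℓq2
        _ = L * c (q + 1) := hblock _
        _ ≤ L * (c q + 1) := Nat.mul_le_mul_left _ (hstep q)
      have step1 : f ℓ ≤ ((L * (c q + 1) : ℕ) : ℝ) / ((q * L : ℕ) : ℝ) := by
        apply div_le_div₀ (by positivity) (by exact_mod_cast hc'le)
          (by positivity) (by exact_mod_cast hℓq1)
      have step2 : ((L * (c q + 1) : ℕ) : ℝ) / ((q * L : ℕ) : ℝ) = g q + 1 / q := by
        push_cast
        rw [hg]
        have hqpos : (0 : ℝ) < q := by exact_mod_cast hq1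
        have hLpos : (0 : ℝ) < L := by exact_mod_cast hL
        field_simp
      have hgq : g q < B + ε / 4 := hm₀ q (le_trans (le_max_left _ _) hqQ)
      have hinv : 1 / (q : ℝ) ≤ ε / 4 := by
        have h4 : (4 / ε : ℝ) ≤ q := by
          calc (4 / ε : ℝ) ≤ ⌈4 / ε⌉₊ := Nat.le_ceil _
          _ ≤ q := by exact_mod_cast le_trans (le_trans (le_max_right _ _) (le_max_right _ _)) hqQ
        have h40 : (0 : ℝ) < 4 / ε := by positivity
        have := one_div_le_one_div_of_le h40 h4
        rwa [one_div_div] at this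
      calc f ℓ ≤ g q + 1 / q := by rw [← step2] at *; exact step1
      _ ≤ B + ε / 4 + ε / 4 := by linarith
    linarith
  · -- limsup g ≤ limsup f
    have : limsup g atTop = limsup (f ∘ (fun m => m * L)) atTop := by
      congr 1
      funext m
      exact hfg m
    rw [this]
    have hmap : Filter.map (fun m : ℕ => m * L) atTop ≤ atTop :=
      (tendsto_atTop_atTop.mpr (fun b => ⟨b, fun a ha => le_trans ha (Nat.le_mul_of_pos_right a (by omega))⟩))
    have heq : limsup (f ∘ (fun m : ℕ => m * L)) atTop
        = limsup f (Filter.map (fun m : ℕ => m * L) atTop) := by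
      simp only [Filter.limsup, ← Filter.map_map]
    rw [heq]
    haveI : (Filter.map (fun m : ℕ => m * L) atTop).NeBot := Filter.map_neBot
    exact limsup_le_limsup_of_le hmap
      ((isBoundedUnder_of (r := (· ≥ ·)) ⟨0, hf0⟩).isCoboundedUnder_le) hfb

/-- Let `τ` be a uniform substitution with common image length `L` such that
`d_H(τ(a), τ(b)) = L` for all distinct letters `a ≠ b`. Then the induced map `τ̄` (here `G`,
characterized by `G(z) = τ(z_0)τ(z_1)τ(z_2)⋯`) is an isometry for the Besicovitch
pseudometric. -/
theorem marked_uniform_substitution_isometry {A : Type*} [Fintype A] [DecidableEq A]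
    (τ : A → List A) (L : ℕ) (hL : 1 ≤ L)
    (hunif : ∀ a, (τ a).length = L)
    (hmark : ∀ a b : A, a ≠ b → hammingL (τ a) (τ b) = L)
    (G : (ℕ → A) → ℕ → A)
    (hG : ∀ (z : ℕ → A) (n k : ℕ) (h : k < (τ (z n)).length),
      G z (n * L + k) = (τ (z n)).get ⟨k, h⟩)
    (x y : ℕ → A) :
    besic (G x) (G y) = besic x y := by
  have hGne := G_ne_iff τ L hL hunif hmark G hG x y
  have hcnt' : ∀ n, cnt (G x) (G y) n
      = cnt (fun i => x (i / L)) (fun i => y (i / L)) n := by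
    intro n
    unfold cnt
    congr 1
    apply List.filter_congr
    intro i _
    exact decide_eq_decide.mpr (by simpa using hGne i)
  have hbes : ∀ (u v : ℕ → A),
      besic u v = limsup (fun l : ℕ => (cnt u v l : ℝ) / l) atTop := by
    intro u v
    unfold besic
    congr 1
    funext l
    rw [hammingL_factor_eq_cnt]
  rw [hbes, hbes]
  have hfun : (fun l : ℕ => (cnt (G x) (G y) l : ℝ) / l)
      = fun l : ℕ => (cnt (fun i => x (i / L)) (fun i => y (i / L)) l : ℝ) / l :=
    funext fun l => by rw [hcnt' l]
  rw [hfun]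
  exact limsup_block_eq (cnt x y) (cnt (fun i => x (i / L)) (fun i => y (i / L))) L hL
    (cnt_mono _ _) (cnt_block x y L hL) (cnt_succ_le x y) (cnt_le x y) (cnt_le _ _)
end

section
/- For every x, y ∈ A^ℕ, if 𝔡_L(x,y) = 0 then for every p ∈ ℕ there exist i, j ∈ ℕ such that x_[i,i+p) = y_[j,j+p); i.e., x and y have a common factor of every length. -/
open Filter

/-- The maximal length of a common (not necessarily contiguous) subsequence of `u` and `v`. -/
noncomputable def lcs {A : Type*} (u v : List A) : ℕ :=
  sSup {n | ∃ w : List A, w.length = n ∧ w.Sublist u ∧ w.Sublist v}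

/-- The (halved) Levenshtein distance `d_L(u,v) = (|u|+|v|)/2 - ℓ(u,v)`. -/
noncomputable def levD {A : Type*} (u v : List A) : ℝ :=
  ((u.length : ℝ) + v.length) / 2 - lcs u v

/-- The Feldman pseudometric `𝔡_L`. -/
noncomputable def feld {A : Type*} (x y : ℕ → A) : ℝ :=
  limsup (fun l : ℕ => levD (factor x 0 l) (factor y 0 l) / l) atTop

/- ---------- auxiliary lemmas ---------- -/

lemma lcs_exists {A : Type*} (u v : List A) :
    ∃ w : List A, w.length = lcs u v ∧ w.Sublist u ∧ w.Sublist v := by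
  have hne : ({n | ∃ w : List A, w.length = n ∧ w.Sublist u ∧ w.Sublist v}).Nonempty :=
    ⟨0, [], rfl, List.nil_sublist u, List.nil_sublist v⟩
  have hbdd : BddAbove {n | ∃ w : List A, w.length = n ∧ w.Sublist u ∧ w.Sublist v} := by
    refine ⟨u.length, ?_⟩
    rintro n ⟨w, rfl, hwu, -⟩
    exact hwu.length_le
  have := Nat.sSup_mem hne hbdd
  obtain ⟨w, hw⟩ := this
  exact ⟨w, hw⟩

lemma lcs_le_left {A : Type*} (u v : List A) : lcs u v ≤ u.length := by
  obtain ⟨w, hw, hu, -⟩ := lcs_exists u v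
  simpa [hw] using hu.length_le

/-- Additivity of a step-monotone function on an initial segment. -/
lemma step_add (F : ℕ → ℕ) (m : ℕ) (h : ∀ s, s + 1 < m → F s < F (s + 1)) :
    ∀ d a, a + d < m → F a + d ≤ F (a + d) := by
  intro d
  induction d with
  | zero => intro a _; simp
  | succ d ih =>
    intro a ha
    have h1 : a + d + 1 < m := by omega
    have h2 := ih a (by omega)
    have h3 := h (a + d) h1
    have e : a + (d + 1) = a + d + 1 := by omega
    rw [e]
    omega

lemma strictmono_seg (F : ℕ → ℕ) (m : ℕ) (h : ∀ s, s + 1 < m → F s < F (s + 1)) :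
    ∀ a b, a < b → b < m → F a < F b := by
  intro a b hab hbm
  have := step_add F m h (b - a) a (by omega)
  have hba : a + (b - a) = b := by omega
  rw [hba] at this
  omega

/-- The number of "broken" steps of a strictly increasing map `[0,m) → [0,ℓ)`
is at most `ℓ - m`. -/
lemma card_bad_le (F : ℕ → ℕ) (m ℓ : ℕ)
    (hmono : ∀ s, s + 1 < m → F s < F (s + 1))
    (hlt : ∀ s, s < m → F s < ℓ) (hm : 0 < m) :
    ((Finset.range (m - 1)).filter (fun s => F (s + 1) ≠ F s + 1)).card ≤ ℓ - m := by
  classical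
  set B := (Finset.range (m - 1)).filter (fun s => F (s + 1) ≠ F s + 1) with hB
  set T := Finset.range ℓ \ (Finset.range m).image F with hT
  have hmap : ∀ s ∈ B, F s + 1 ∈ T := by
    intro s hs
    rw [hB, Finset.mem_filter, Finset.mem_range] at hs
    obtain ⟨hsm, hsne⟩ := hs
    have hs1 : s + 1 < m := by omega
    have hlt1 : F s + 1 < ℓ := lt_of_le_of_lt (by have := hmono s hs1; omega) (hlt (s+1) hs1)
    rw [hT, Finset.mem_sdiff, Finset.mem_range]
    refine ⟨hlt1, ?_⟩
    simp only [Finset.mem_image, Finset.mem_range]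
    rintro ⟨r, hrm, hr⟩
    have hrs : s < r := by
      by_contra hc
      push_neg at hc
      have hle : F r ≤ F s := by
        rcases eq_or_lt_of_le hc with h2 | h2
        · subst h2; exact le_rfl
        · exact (strictmono_seg F m hmono r s h2 (by omega)).le
      omega
    have hrs2 : r ≠ s + 1 := by intro h2; subst h2; exact hsne hr
    have h4 := strictmono_seg F m hmono (s + 1) r (by omega) hrm
    have h5 := hmono s hs1
    omega
  have hinj : Set.InjOn (fun s => F s + 1) B := by
    intro a ha b hb hab
    rw [Finset.mem_coe, hB, Finset.mem_filter, Finset.mem_range] at ha hb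
    simp only at hab
    by_contra hne
    rcases lt_or_gt_of_ne hne with h1 | h1
    · have := strictmono_seg F m hmono a b h1 (by omega); omega
    · have := strictmono_seg F m hmono b a h1 (by omega); omega
  have hcard : B.card ≤ T.card := Finset.card_le_card_of_injOn _ hmap hinj
  have himg : ((Finset.range m).image F).card = m := by
    rw [Finset.card_image_of_injOn, Finset.card_range]
    intro a ha b hb hab
    rw [Finset.mem_coe, Finset.mem_range] at ha hb
    by_contra hne
    rcases lt_or_gt_of_ne hne with h1 | h1
    · have := strictmono_seg F m hmono a b h1 hb; omega
    · have := strictmono_seg F m hmono b a h1 ha; omega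
  have hsub : (Finset.range m).image F ⊆ Finset.range ℓ := by
    intro a ha
    simp only [Finset.mem_image, Finset.mem_range] at ha ⊢
    obtain ⟨r, hr, rfl⟩ := ha
    exact hlt r hr
  have : T.card = ℓ - m := by
    rw [hT, Finset.card_sdiff_of_subset hsub, Finset.card_range, himg]
  omega

/-- Key combinatorial lemma: two strictly increasing maps `[0,m) → [0,ℓ)` with
`m` large enough have a common "straight run" of length `p`. -/
lemma exists_run (F G : ℕ → ℕ) (m ℓ p : ℕ)
    (hF : ∀ s, s + 1 < m → F s < F (s + 1)) (hG : ∀ s, s + 1 < m → G s < G (s + 1))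
    (hFlt : ∀ s, s < m → F s < ℓ) (hGlt : ∀ s, s < m → G s < ℓ)
    (hp : 0 < p) (hbig : 2 * (ℓ - m) * p + p < m) :
    ∃ t, t + p ≤ m ∧ ∀ d, d < p → F (t + d) = F t + d ∧ G (t + d) = G t + d := by
  classical
  have hm : 0 < m := by omega
  set k := ℓ - m with hk
  set BF := (Finset.range (m - 1)).filter (fun s => F (s + 1) ≠ F s + 1) with hBF
  set BG := (Finset.range (m - 1)).filter (fun s => G (s + 1) ≠ G s + 1) with hBG
  have hBFc : BF.card ≤ k := card_bad_le F m ℓ hF hFlt hm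
  have hBGc : BG.card ≤ k := card_bad_le G m ℓ hG hGlt hm
  set bad := (BF ∪ BG).biUnion (fun s => Finset.Icc (s + 1 - p) s) with hbad
  have hbadc : bad.card ≤ 2 * k * p := by
    calc bad.card ≤ ∑ s ∈ BF ∪ BG, (Finset.Icc (s + 1 - p) s).card :=
          Finset.card_biUnion_le
      _ ≤ ∑ _s ∈ BF ∪ BG, p := by
          refine Finset.sum_le_sum fun s _ => ?_
          rw [Nat.card_Icc]; omega
      _ = (BF ∪ BG).card * p := by rw [Finset.sum_const, smul_eq_mul]
      _ ≤ (BF.card + BG.card) * p := by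
          exact Nat.mul_le_mul_right p (Finset.card_union_le _ _)
      _ ≤ 2 * k * p := by nlinarith
  have hlt : bad.card < (Finset.range (m - p + 1)).card := by
    rw [Finset.card_range]; omega
  have hnsub : ¬ (Finset.range (m - p + 1) ⊆ bad) := fun hsub =>
    absurd (Finset.card_le_card hsub) (by omega)
  obtain ⟨t, ht, htbad⟩ := Finset.not_subset.mp hnsub
  rw [Finset.mem_range] at ht
  refine ⟨t, by omega, ?_⟩
  have hgood : ∀ s, t ≤ s → s + 1 < t + p → F (s + 1) = F s + 1 ∧ G (s + 1) = G s + 1 := by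
    intro s hts hsp
    have hsB : s ∉ BF ∪ BG := by
      intro hsmem
      apply htbad
      rw [hbad, Finset.mem_biUnion]
      exact ⟨s, hsmem, by rw [Finset.mem_Icc]; omega⟩
    rw [Finset.mem_union, hBF, hBG] at hsB
    push_neg at hsB
    obtain ⟨h1, h2⟩ := hsB
    have hsm : s ∈ Finset.range (m - 1) := by rw [Finset.mem_range]; omega
    have e1 : ¬ F (s + 1) ≠ F s + 1 := fun hne => h1 (Finset.mem_filter.mpr ⟨hsm, hne⟩)
    have e2 : ¬ G (s + 1) ≠ G s + 1 := fun hne => h2 (Finset.mem_filter.mpr ⟨hsm, hne⟩)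
    exact ⟨not_not.mp e1, not_not.mp e2⟩
  intro d hd
  induction d with
  | zero => simp
  | succ d ih =>
    obtain ⟨ihF, ihG⟩ := ih (by omega)
    obtain ⟨eF, eG⟩ := hgood (t + d) (by omega) (by omega)
    constructor
    · rw [show t + (d+1) = t + d + 1 from rfl, eF, ihF]; omega
    · rw [show t + (d+1) = t + d + 1 from rfl, eG, ihG]; omega

lemma factor_length {A : Type*} (x : ℕ → A) (i n : ℕ) : (factor x i n).length = n := by
  simp [factor]

lemma factor_get {A : Type*} (x : ℕ → A) (i n : ℕ) (j : Fin (factor x i n).length) :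
    (factor x i n).get j = x (i + j.val) := by
  rw [List.get_eq_getElem]
  simp [factor, List.get_ofFn]

/-- If `𝔡_L(x,y) = 0` then `x` and `y` have a common factor of every length. -/
theorem feld_zero_common_factor {A : Type*} (x y : ℕ → A) (h : feld x y = 0) :
    ∀ p : ℕ, ∃ i j : ℕ, factor x i p = factor y j p := by
  intro p
  rcases Nat.eq_zero_or_pos p with hp | hp
  · subst hp
    exact ⟨0, 0, by simp [factor]⟩
  -- the sequence is bounded above by 1
  have hb : IsBoundedUnder (· ≤ ·) atTop
      (fun l : ℕ => levD (factor x 0 l) (factor y 0 l) / l) := by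
    apply isBoundedUnder_of
    refine ⟨1, fun l => ?_⟩
    rcases Nat.eq_zero_or_pos l with hl | hl
    · subst hl; simp
    · apply div_le_one_of_le₀
      · have h0 : (0 : ℝ) ≤ lcs (factor x 0 l) (factor y 0 l) := Nat.cast_nonneg _
        rw [levD, factor_length, factor_length]
        linarith
      · exact Nat.cast_nonneg _
  set ε : ℝ := 1 / (2 * (2 * p + 1)) with hε
  have hεpos : 0 < ε := by positivity
  have hls : limsup (fun l : ℕ => levD (factor x 0 l) (factor y 0 l) / l) atTop < ε := by
    rw [show limsup (fun l : ℕ => levD (factor x 0 l) (factor y 0 l) / l) atTop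
        = feld x y from rfl, h]
    exact hεpos
  have hev := eventually_lt_of_limsup_lt hls hb
  rw [eventually_atTop] at hev
  obtain ⟨L₀, hL₀⟩ := hev
  set ℓ := max L₀ (2 * p) with hℓ
  have hℓ2p : 2 * p ≤ ℓ := le_max_right _ _
  have hℓpos : 0 < ℓ := by omega
  set u := factor x 0 ℓ with hu
  set v := factor y 0 ℓ with hv
  set m := lcs u v with hm
  have hmℓ : m ≤ ℓ := by
    have := lcs_le_left u v
    rwa [hu, factor_length] at this
  set k := ℓ - m with hk
  have hlev : levD u v = (k : ℝ) := by
    rw [levD, hu, hv, factor_length, factor_length, hk,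
      Nat.cast_sub hmℓ]
    ring_nf
    rfl
  have hεℓ : levD u v / ℓ < ε := hL₀ ℓ (le_max_left _ _)
  have hkε : (k : ℝ) * (2 * (2 * p + 1)) < ℓ := by
    rw [hlev] at hεℓ
    have hℓR : (0 : ℝ) < ℓ := by exact_mod_cast hℓpos
    rw [div_lt_iff₀ hℓR, hε] at hεℓ
    have h2 : (0 : ℝ) < 2 * (2 * p + 1) := by positivity
    calc (k : ℝ) * (2 * (2 * p + 1)) < (1 / (2 * (2 * p + 1)) * ℓ) * (2 * (2 * p + 1)) := by
          exact mul_lt_mul_of_pos_right hεℓ h2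
      _ = ℓ := by field_simp
  have hkℕ : k * (2 * (2 * p + 1)) < ℓ := by exact_mod_cast hkε
  have hbig : 2 * k * p + p < m := by
    rcases Nat.eq_zero_or_pos k with hk0 | hk0
    · rw [hk0]; simp; omega
    · have h1 : p < k * (2 * p + 1) := by nlinarith
      have h2 : k * (2 * p + 1) + p < ℓ := by nlinarith
      have h3 : 2 * k * p + p + k < ℓ := by nlinarith
      omega
  -- extract common subsequence and embeddings
  obtain ⟨w, hwlen, hwu, hwv⟩ := lcs_exists u v
  obtain ⟨f, hf⟩ := List.sublist_iff_exists_fin_orderEmbedding_get_eq.mp hwu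
  obtain ⟨g, hg⟩ := List.sublist_iff_exists_fin_orderEmbedding_get_eq.mp hwv
  set F : ℕ → ℕ := fun s => if hs : s < w.length then (f ⟨s, hs⟩ : Fin u.length).val else 0
    with hF
  set G : ℕ → ℕ := fun s => if hs : s < w.length then (g ⟨s, hs⟩ : Fin v.length).val else 0
    with hG
  have hFmono : ∀ s, s + 1 < w.length → F s < F (s + 1) := by
    intro s hs
    have hs' : s < w.length := by omega
    simp only [hF, dif_pos hs, dif_pos hs']
    exact f.strictMono (by exact Fin.mk_lt_mk.mpr (by omega))
  have hGmono : ∀ s, s + 1 < w.length → G s < G (s + 1) := by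
    intro s hs
    have hs' : s < w.length := by omega
    simp only [hG, dif_pos hs, dif_pos hs']
    exact g.strictMono (by exact Fin.mk_lt_mk.mpr (by omega))
  have hulen : u.length = ℓ := by rw [hu, factor_length]
  have hvlen : v.length = ℓ := by rw [hv, factor_length]
  have hFlt : ∀ s, s < w.length → F s < ℓ := by
    intro s hs
    simp only [hF, dif_pos hs]
    rw [← hulen]
    exact (f ⟨s, hs⟩).isLt
  have hGlt : ∀ s, s < w.length → G s < ℓ := by
    intro s hs
    simp only [hG, dif_pos hs]
    rw [← hvlen]
    exact (g ⟨s, hs⟩).isLt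
  have hbig' : 2 * (ℓ - w.length) * p + p < w.length := by rw [hwlen, ← hm]; exact hbig
  obtain ⟨t, htp, hrun⟩ := exists_run F G w.length ℓ p hFmono hGmono hFlt hGlt hp hbig'
  refine ⟨F t, G t, ?_⟩
  rw [factor, factor]
  congr 1
  funext d
  have hd : (d : ℕ) < p := d.isLt
  have htd : t + (d : ℕ) < w.length := by omega
  obtain ⟨hFd, hGd⟩ := hrun d hd
  have e1 : x (F t + (d : ℕ)) = w.get ⟨t + d, htd⟩ := by
    rw [← hFd]
    simp only [hF, dif_pos htd]
    rw [hf ⟨t + d, htd⟩]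
    simpa using (factor_get x 0 ℓ (f ⟨t + d, htd⟩)).symm
  have e2 : y (G t + (d : ℕ)) = w.get ⟨t + d, htd⟩ := by
    rw [← hGd]
    simp only [hG, dif_pos htd]
    rw [hg ⟨t + d, htd⟩]
    simpa using (factor_get y 0 ℓ (g ⟨t + d, htd⟩)).symm
  rw [e1, e2]
end

section
/- Let f : A^s → A^+ be the local rule of a dill map and M, M' ∈ ℕ be such that for every finite word u and every position j < |u|: d_L(f^*(D_j(u)), f^*(u)) ≤ M + (|f^*(u)| − |f^*(D_j(u))|)/2 and d_L(f^*(D_j(u)), f^*(u)) ≤ M' − (|f^*(u)| − |f^*(D_j(u))|)/2. Then for every l ∈ ℕ and all words u, v of length l: d_L(f^*(u), f^*(v)) ≤ (M + M')·d_L(u,v) − | |f^*(u)| − |f^*(v)| |/2. -/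
open Filter

/-- The window `u_[i, i+s)` of the finite word `u`. -/
def listWindow {A : Type*} [Inhabited A] (u : List A) (i : ℕ) (s : ℕ) : Fin s → A :=
  fun k => u.getD (i + k) default

/-- The extension `f^*` of a local rule `f` to finite words:
`f^*(u) = f(u_[0,s)) ⋯ f(u_[|u|-s,|u|))` when `|u| ≥ s`, and the empty word otherwise. -/
def fstar {A : Type*} [Inhabited A] {s : ℕ} (f : (Fin s → A) → List A) (u : List A) : List A :=
  ((List.range (u.length + 1 - s)).map (fun i => f (listWindow u i s))).flatten

lemma lcs_bdd {A : Type*} (u v : List A) :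
    BddAbove {n | ∃ w : List A, w.length = n ∧ w.Sublist u ∧ w.Sublist v} :=
  ⟨u.length, fun n ⟨w, hw, hu, _⟩ => hw ▸ hu.length_le⟩

lemma le_lcs {A : Type*} {u v w : List A} (hu : w.Sublist u) (hv : w.Sublist v) :
    w.length ≤ lcs u v :=
  le_csSup (lcs_bdd u v) ⟨w, rfl, hu, hv⟩

lemma lcs_comm {A : Type*} (u v : List A) : lcs u v = lcs v u := by
  unfold lcs; congr 1; ext n; exact ⟨fun ⟨w,a,b,c⟩ => ⟨w,a,c,b⟩, fun ⟨w,a,b,c⟩ => ⟨w,a,c,b⟩⟩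

lemma levD_comm {A : Type*} (u v : List A) : levD u v = levD v u := by
  unfold levD; rw [lcs_comm]; ring

lemma lcs_self {A : Type*} (u : List A) : lcs u u = u.length :=
  le_antisymm (csSup_le ⟨0, ⟨[], rfl, List.nil_sublist u, List.nil_sublist u⟩⟩
    (fun n ⟨w, hw, hu, _⟩ => hw ▸ hu.length_le)) (le_lcs (List.Sublist.refl u) (List.Sublist.refl u))

lemma levD_self {A : Type*} (u : List A) : levD u u = 0 := by
  unfold levD; rw [lcs_self]; ring

lemma sublist_inter {A : Type*} : ∀ (v p q : List A), p.Sublist v → q.Sublist v →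
    ∃ r : List A, r.Sublist p ∧ r.Sublist q ∧ p.length + q.length ≤ v.length + r.length := by
  intro v
  induction v with
  | nil =>
    intro p q hp hq
    simp only [List.sublist_nil] at hp hq
    subst hp; subst hq
    exact ⟨[], by simp, by simp, by simp⟩
  | cons a v ih =>
    intro p q hp hq
    rcases List.sublist_cons_iff.mp hp with hp' | ⟨p', rfl, hp'⟩
    · rcases List.sublist_cons_iff.mp hq with hq' | ⟨q', rfl, hq'⟩
      · obtain ⟨r, h1, h2, h3⟩ := ih p q hp' hq'
        exact ⟨r, h1, h2, by simp; omega⟩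
      · obtain ⟨r, h1, h2, h3⟩ := ih p q' hp' hq'
        exact ⟨r, h1, h2.trans (List.sublist_cons_self a q'), by simp at h3 ⊢; omega⟩
    · rcases List.sublist_cons_iff.mp hq with hq' | ⟨q', rfl, hq'⟩
      · obtain ⟨r, h1, h2, h3⟩ := ih p' q hp' hq'
        exact ⟨r, h1.trans (List.sublist_cons_self a p'), h2, by simp at h3 ⊢; omega⟩
      · obtain ⟨r, h1, h2, h3⟩ := ih p' q' hp' hq'
        exact ⟨a :: r, h1.cons₂ a, h2.cons₂ a, by simp at h3 ⊢; omega⟩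

lemma lcs_triangle {A : Type*} (u v w : List A) :
    lcs u v + lcs v w ≤ v.length + lcs u w := by
  obtain ⟨p, hp, hpu, hpv⟩ := lcs_exists u v
  obtain ⟨q, hq, hqv, hqw⟩ := lcs_exists v w
  obtain ⟨r, hrp, hrq, hlen⟩ := sublist_inter v p q hpv hqv
  have : r.length ≤ lcs u w := le_lcs (hrp.trans hpu) (hrq.trans hqw)
  omega

lemma levD_triangle {A : Type*} (u v w : List A) :
    levD u w ≤ levD u v + levD v w := by
  have h := lcs_triangle u v w
  unfold levD
  have : (lcs u v : ℝ) + lcs v w ≤ (v.length : ℝ) + lcs u w := by exact_mod_cast h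
  linarith

lemma exists_erase {A : Type*} : ∀ {w u : List A}, w.Sublist u → w.length < u.length →
    ∃ j < u.length, w.Sublist (u.eraseIdx j) := by
  intro w u h
  induction h with
  | slnil => simp
  | @cons l₁ l₂ a h ih =>
    intro _
    exact ⟨0, by simp, by simpa using h⟩
  | @cons_cons l₁ l₂ a h ih =>
    intro hlen
    simp only [List.length_cons, add_lt_add_iff_right] at hlen
    obtain ⟨j, hj, hsub⟩ := ih hlen
    exact ⟨j + 1, by simp; omega, by simpa [List.eraseIdx_cons_succ] using hsub.cons₂ a⟩

lemma chain_bound {A : Type*} [Inhabited A] {s : ℕ}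
    (f : (Fin s → A) → List A) (M M' : ℕ)
    (h1 : ∀ (u : List A) (j : ℕ), j < u.length →
      levD (fstar f (u.eraseIdx j)) (fstar f u) ≤
        (M : ℝ) + (((fstar f u).length : ℝ) - ((fstar f (u.eraseIdx j)).length : ℝ)) / 2)
    (h2 : ∀ (u : List A) (j : ℕ), j < u.length →
      levD (fstar f (u.eraseIdx j)) (fstar f u) ≤
        (M' : ℝ) - (((fstar f u).length : ℝ) - ((fstar f (u.eraseIdx j)).length : ℝ)) / 2) :
    ∀ (n : ℕ) (u w : List A), w.Sublist u → u.length = w.length + n →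
      levD (fstar f w) (fstar f u) ≤
          (n : ℝ) * M + (((fstar f u).length : ℝ) - ((fstar f w).length : ℝ)) / 2 ∧
      levD (fstar f w) (fstar f u) ≤
          (n : ℝ) * M' - (((fstar f u).length : ℝ) - ((fstar f w).length : ℝ)) / 2 := by
  intro n
  induction n with
  | zero =>
    intro u w hsub hlen
    have : w = u := hsub.eq_of_length (by omega)
    subst this
    simp [levD_self]
  | succ n ih =>
    intro u w hsub hlen
    obtain ⟨j, hj, hsub'⟩ := exists_erase hsub (by omega)
    have hlen' : (u.eraseIdx j).length = w.length + n := by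
      rw [List.length_eraseIdx_of_lt hj]; omega
    obtain ⟨ih1, ih2⟩ := ih (u.eraseIdx j) w hsub' hlen'
    have htri := levD_triangle (fstar f w) (fstar f (u.eraseIdx j)) (fstar f u)
    have hs1 := h1 u j hj
    have hs2 := h2 u j hj
    push_cast
    constructor <;> linarith

/-- If each single deletion changes `f^*` by at most `M + (|f^*(u)| - |f^*(D_j(u))|)/2`
and at most `M' - (|f^*(u)| - |f^*(D_j(u))|)/2` (in Levenshtein distance), then for all
words `u, v` of the same length,
`d_L(f^*(u), f^*(v)) ≤ (M+M')·d_L(u,v) - ||f^*(u)| - |f^*(v)||/2`. -/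
theorem fstar_levD_bound {A : Type*} [Inhabited A] (s : ℕ) (hs : 1 ≤ s)
    (f : (Fin s → A) → List A) (hf : ∀ u, f u ≠ []) (M M' : ℕ)
    (h1 : ∀ (u : List A) (j : ℕ), j < u.length →
      levD (fstar f (u.eraseIdx j)) (fstar f u) ≤
        (M : ℝ) + (((fstar f u).length : ℝ) - ((fstar f (u.eraseIdx j)).length : ℝ)) / 2)
    (h2 : ∀ (u : List A) (j : ℕ), j < u.length →
      levD (fstar f (u.eraseIdx j)) (fstar f u) ≤
        (M' : ℝ) - (((fstar f u).length : ℝ) - ((fstar f (u.eraseIdx j)).length : ℝ)) / 2) :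
    ∀ (l : ℕ) (u v : List A), u.length = l → v.length = l →
      levD (fstar f u) (fstar f v) ≤
        ((M : ℝ) + (M' : ℝ)) * levD u v -
          |((fstar f u).length : ℝ) - ((fstar f v).length : ℝ)| / 2 := by
  intro l u v hu hv
  obtain ⟨w, hw, hwu, hwv⟩ := lcs_exists u v
  have hle : lcs u v ≤ l := by
    have := hwu.length_le; omega
  set k := l - lcs u v with hk
  have hku : u.length = w.length + k := by omega
  have hkv : v.length = w.length + k := by omega
  obtain ⟨hu1, hu2⟩ := chain_bound f M M' h1 h2 k u w hwu hku
  obtain ⟨hv1, hv2⟩ := chain_bound f M M' h1 h2 k v w hwv hkv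
  have htri := levD_triangle (fstar f u) (fstar f w) (fstar f v)
  have hsymm : levD (fstar f u) (fstar f w) = levD (fstar f w) (fstar f u) :=
    levD_comm _ _
  have hlev : levD u v = (k : ℝ) := by
    unfold levD
    rw [hu, hv]
    have : (lcs u v : ℝ) = (l : ℝ) - (k : ℝ) := by
      push_cast [hk]
      rw [Nat.cast_sub hle]; ring
    rw [this]; ring
  rw [hlev]
  rcases abs_cases (((fstar f u).length : ℝ) - ((fstar f v).length : ℝ)) with ⟨he, _⟩ | ⟨he, _⟩ <;>
    rw [he] <;> linarith
end
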